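/- arXiv:2604.15993 — 5 statements merged into one kernel-verified Lean document; each statement's English description precedes it below -/
import Mathlib

section
/- Let θ ∈ (0, π/2], R > 0, let e ∈ ℝ^{n+1} be a unit vector, and set λ = √(R² + 2R·cos θ + 1). Then for every x ∈ ℝ^{n+1} with ‖x − λe‖ = R, writing ν = (x − λe)/R and X_e(x) = ⟨x, e⟩·x − ½(‖x‖² + 1)·e, one has R·⟨x + cos θ·ν, e⟩ − ⟨X_e(x), ν⟩ = 0. (Since every principal curvature of the sphere of radius R equals 1/R, so that F = 1/R for any normalized curvature function, this says that θ-capillary spherical caps around the e-axis are stationary solutions of the flow with normal speed ⟨x + cos θ·ν, e⟩/F − ⟨X_e, ν⟩.) -/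
open Real
open scoped RealInnerProductSpace

/-- Let `θ ∈ (0, π/2]`, `R > 0`, `e` a unit vector and
`lam = √(R² + 2R cos θ + 1)`.  For every `x` with `‖x - lam • e‖ = R`, writing
`ν = R⁻¹ • (x - lam • e)` and `X_e(x) = ⟪x, e⟫ • x - ½(‖x‖² + 1) • e`, one has
`R·⟪x + cos θ • ν, e⟫ - ⟪X_e(x), ν⟫ = 0`: θ-capillary spherical caps around the
`e`-axis are stationary for the flow with speed `⟪x + cos θ • ν, e⟫/F - ⟪X_e, ν⟫`,
since `F = 1/R` on a sphere of radius `R`. -/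
theorem stmt_6 (n : ℕ) (θ R : ℝ) (hθ₁ : 0 < θ) (hθ₂ : θ ≤ π / 2) (hR : 0 < R)
    (e : EuclideanSpace ℝ (Fin (n + 1))) (he : ‖e‖ = 1)
    (lam : ℝ) (hlam : lam = Real.sqrt (R ^ 2 + 2 * R * Real.cos θ + 1))
    (x : EuclideanSpace ℝ (Fin (n + 1))) (hx : ‖x - lam • e‖ = R)
    (ν : EuclideanSpace ℝ (Fin (n + 1))) (hν : ν = R⁻¹ • (x - lam • e)) :
    R * ⟪x + Real.cos θ • ν, e⟫ -
      ⟪⟪x, e⟫ • x - ((1 : ℝ) / 2 * (‖x‖ ^ 2 + 1)) • e, ν⟫ = 0 := by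
  have hcos : 0 ≤ Real.cos θ :=
    Real.cos_nonneg_of_mem_Icc ⟨by linarith [Real.pi_pos], hθ₂⟩
  have hnn : 0 ≤ R ^ 2 + 2 * R * Real.cos θ + 1 := by positivity
  have hlam2 : lam ^ 2 = R ^ 2 + 2 * R * Real.cos θ + 1 := by
    rw [hlam, Real.sq_sqrt hnn]
  have hee : ⟪e, e⟫ = 1 := by
    rw [real_inner_self_eq_norm_sq, he]; norm_num
  have hxx : ⟪x - lam • e, x - lam • e⟫ = R ^ 2 := by
    rw [real_inner_self_eq_norm_sq, hx]
  have hxs : ‖x‖ ^ 2 = ⟪x, x⟫ := (real_inner_self_eq_norm_sq x).symm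
  subst hν
  rw [hxs]
  simp only [inner_sub_left, inner_sub_right, inner_add_left, inner_smul_left,
    inner_smul_right, real_inner_comm x e, conj_trivial] at hxx ⊢
  rw [hee] at hxx ⊢
  generalize hA : (inner ℝ x e : ℝ) = a at hxx ⊢
  generalize hS : (inner ℝ x x : ℝ) = s at hxx ⊢
  field_simp
  linear_combination (-(a + lam)) * hxx + (lam - a) * hlam2
end

section
/- For n ≥ 1 and 1 ≤ k ≤ n, the Garding cone Γ_k = {κ ∈ ℝⁿ : H₁(κ) > 0, H₂(κ) > 0, …, H_k(κ) > 0} is an open convex cone: it is open, convex, closed under multiplication by positive scalars, invariant under permutations of the coordinates, and contains the positive cone (0, ∞)ⁿ. -/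
/-- Normalized `j`-th elementary symmetric polynomial `H_j` of `κ ∈ ℝⁿ`,
`H_j(κ) = (n choose j)⁻¹ · Σ_{i₁<⋯<i_j} κ_{i₁}⋯κ_{i_j}`, with `H₀ = 1`. -/
noncomputable def Hsym (n j : ℕ) (κ : Fin n → ℝ) : ℝ :=
  ((n.choose j : ℝ))⁻¹ *
    ∑ s ∈ Finset.powersetCard j (Finset.univ : Finset (Fin n)), ∏ i ∈ s, κ i

/-- The Garding cone `Γ_k = {κ ∈ ℝⁿ : H₁(κ) > 0, …, H_k(κ) > 0}`. -/
def GardingCone (n k : ℕ) : Set (Fin n → ℝ) :=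
  {κ | ∀ j, 1 ≤ j → j ≤ k → 0 < Hsym n j κ}


open Polynomial Finset Filter Set Topology

namespace Gd

variable {n : ℕ}

/-- unnormalized elementary symmetric function -/
def eS {R : Type*} [CommSemiring R] (n k : ℕ) (v : Fin n → R) : R :=
  ∑ s ∈ Finset.powersetCard k (Finset.univ : Finset (Fin n)), ∏ i ∈ s, v i

lemma eS_zero {R : Type*} [CommSemiring R] (v : Fin n → R) : eS n 0 v = 1 := by
  simp [eS]

lemma eS_smul {R : Type*} [CommSemiring R] (k : ℕ) (c : R) (v : Fin n → R) :
    eS n k (fun i => c * v i) = c ^ k * eS n k v := by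
  unfold eS
  rw [Finset.mul_sum]
  refine Finset.sum_congr rfl fun s hs => ?_
  rw [Finset.prod_mul_distrib, Finset.prod_const, (Finset.mem_powersetCard.mp hs).2]

lemma eS_map {R S : Type*} [CommSemiring R] [CommSemiring S] (f : R →+* S) (k : ℕ)
    (v : Fin n → R) : f (eS n k v) = eS n k (fun i => f (v i)) := by
  simp [eS, map_sum, map_prod]

lemma eS_pos {k : ℕ} (hk : k ≤ n) {v : Fin n → ℝ} (hv : ∀ i, 0 < v i) : 0 < eS n k v := by
  have hne : (Finset.powersetCard k (Finset.univ : Finset (Fin n))).Nonempty :=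
    Finset.powersetCard_nonempty.mpr (by simpa using hk)
  exact Finset.sum_pos (fun s _ => Finset.prod_pos fun i _ => hv i) hne

lemma eS_perm (k : ℕ) {R : Type*} [CommSemiring R] (v : Fin n → R) (σ : Equiv.Perm (Fin n)) :
    eS n k (v ∘ σ) = eS n k v := by
  have huniv : Finset.univ.val.map (σ : Fin n → Fin n) = Finset.univ.val := by
    have := congrArg Finset.val (Finset.map_univ_equiv σ)
    simpa [Finset.map_val] using this
  calc eS n k (v ∘ σ) = (Finset.univ.val.map (v ∘ σ)).esymm k := by
        rw [Finset.esymm_map_val]; rfl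
    _ = ((Finset.univ.val.map (σ : Fin n → Fin n)).map v).esymm k := by
        rw [Multiset.map_map]
    _ = (Finset.univ.val.map v).esymm k := by rw [huniv]
    _ = eS n k v := by rw [Finset.esymm_map_val]; rfl

lemma eS_const {R : Type*} [CommSemiring R] (k : ℕ) (c : R) :
    eS n k (fun _ => c) = (n.choose k : R) * c ^ k := by
  unfold eS
  rw [Finset.sum_congr rfl (fun s hs => ?_), Finset.sum_const, nsmul_eq_mul]
  · congr 1
    rw [Finset.card_powersetCard, Finset.card_univ, Fintype.card_fin]
  · rw [Finset.prod_const, (Finset.mem_powersetCard.mp hs).2]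

/-- `∏ (X + C (v i))` -/
noncomputable def prodX {R : Type*} [CommSemiring R] (v : Fin n → R) : R[X] :=
  ∏ i : Fin n, (X + C (v i))

lemma prodX_monic {R : Type*} [CommSemiring R] (v : Fin n → R) : (prodX v).Monic :=
  monic_prod_of_monic _ _ fun i _ => monic_X_add_C (v i)

lemma prodX_natDegree {R : Type*} [CommSemiring R] [Nontrivial R] (v : Fin n → R) :
    (prodX v).natDegree = n := by
  rw [prodX, natDegree_prod_of_monic _ _ fun i _ => monic_X_add_C (v i)]
  simp

lemma eS_eq_coeff {R : Type*} [CommSemiring R] {k : ℕ} (hk : k ≤ n) (v : Fin n → R) :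
    (prodX v).coeff (n - k) = eS n k v := by
  rw [prodX, Finset.prod_X_add_C_coeff]
  · rw [eS]
    congr 2
    · rw [Finset.card_univ, Fintype.card_fin, Nat.sub_sub_self hk]
  · simpa using Nat.sub_le n k

lemma prodX_map {R S : Type*} [CommSemiring R] [CommSemiring S] (f : R →+* S) (v : Fin n → R) :
    (prodX v).map f = prodX (fun i => f (v i)) := by
  simp [prodX, Polynomial.map_prod]

lemma hasseDeriv_map' {R S : Type*} [CommSemiring R] [CommSemiring S] (f : R →+* S)
    (m : ℕ) (p : R[X]) : (hasseDeriv m p).map f = hasseDeriv m (p.map f) := by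
  ext i
  simp [Polynomial.coeff_map, Polynomial.hasseDeriv_coeff]

/-- shift identity : `eS (v + c·𝟙)` is the Hasse derivative of `prodX v` evaluated at `c`. -/
lemma eS_shift {R : Type*} [CommSemiring R] {k : ℕ} (hk : k ≤ n) (v : Fin n → R) (c : R) :
    eS n k (fun i => v i + c) = (hasseDeriv (n - k) (prodX v)).eval c := by
  have h1 : prodX (fun i => v i + c) = taylor c (prodX v) := by
    rw [taylor_apply]; unfold prodX; rw [Polynomial.prod_comp]
    refine Finset.prod_congr rfl fun i _ => ?_
    rw [add_comp, X_comp, C_comp, map_add]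
    ring
  rw [← eS_eq_coeff hk, h1, taylor_coeff]


/-- `qp n k v` : the polynomial `t ↦ eS n k (v + t·𝟙)`. -/
noncomputable def qp {R : Type*} [CommSemiring R] (n k : ℕ) (v : Fin n → R) : R[X] :=
  hasseDeriv (n - k) (prodX v)

lemma eS_shift' {R : Type*} [CommSemiring R] {k : ℕ} (hk : k ≤ n) (v : Fin n → R) (c : R) :
    eS n k (fun i => v i + c) = (qp n k v).eval c := eS_shift hk v c

lemma qp_map {R S : Type*} [CommSemiring R] [CommSemiring S] (f : R →+* S) (k : ℕ)
    (v : Fin n → R) : (qp n k v).map f = qp n k (fun i => f (v i)) := by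
  rw [qp, hasseDeriv_map', prodX_map]; rfl

lemma qp_coeff {R : Type*} [CommSemiring R] {k : ℕ} (hk : k ≤ n) (v : Fin n → R) {i : ℕ}
    (hi : i ≤ k) :
    (qp n k v).coeff i = ((i + (n - k)).choose (n - k) : R) * eS n (k - i) v := by
  rw [qp, hasseDeriv_coeff]
  congr 1
  have h1 : i + (n - k) = n - (k - i) := by omega
  rw [h1, eS_eq_coeff (by omega) v]

lemma qp_coeff_zero_of_gt {R : Type*} [CommSemiring R] [Nontrivial R] {k : ℕ} (hk : k ≤ n)
    (v : Fin n → R) {i : ℕ} (hi : k < i) : (qp n k v).coeff i = 0 := by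
  rw [qp, hasseDeriv_coeff]
  have : (prodX v).coeff (i + (n - k)) = 0 := by
    apply coeff_eq_zero_of_natDegree_lt
    rw [prodX_natDegree]; omega
  rw [this, mul_zero]

lemma qp_coeff_top {R : Type*} [CommRing R] [CharZero R] {k : ℕ} (hk : k ≤ n) (v : Fin n → R) :
    (qp n k v).coeff k = (n.choose (n - k) : R) := by
  rw [qp_coeff hk v le_rfl, Nat.sub_self, eS_zero, mul_one]
  congr 2
  omega

lemma qp_natDegree {R : Type*} [CommRing R] [CharZero R] {k : ℕ} (hk : k ≤ n) (v : Fin n → R) :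
    (qp n k v).natDegree = k := by
  have hne : (qp n k v).coeff k ≠ 0 := by
    rw [qp_coeff_top hk v]
    exact_mod_cast (Nat.choose_pos (Nat.sub_le n k)).ne'
  refine le_antisymm ?_ (le_natDegree_of_ne_zero hne)
  rw [natDegree_le_iff_coeff_eq_zero]
  exact fun N hN => qp_coeff_zero_of_gt hk v hN

lemma prodX_roots_card (v : Fin n → ℝ) : Multiset.card (prodX v).roots = n := by
  have h1 : prodX v =
      (((Finset.univ.val.map fun i => -v i)).map fun a => X - C a).prod := by
    rw [Multiset.map_map, prodX]
    rw [show (∏ i : Fin n, (X + C (v i))) =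
      ((Finset.univ.val.map fun i => X + C (v i))).prod from rfl]
    congr 1
    apply Multiset.map_congr rfl
    intro i _
    simp [sub_neg_eq_add]
  rw [h1, roots_multiset_prod_X_sub_C]
  simp

lemma iter_deriv_realrooted (p : ℝ[X]) (h : Multiset.card p.roots = p.natDegree) (m : ℕ) :
    (derivative^[m] p).natDegree = p.natDegree - m ∧
      Multiset.card (derivative^[m] p).roots = p.natDegree - m := by
  induction m with
  | zero => constructor <;> simp [h]
  | succ m ih =>
    obtain ⟨ih1, ih2⟩ := ih
    set q := derivative^[m] p with hq
    have h1 : (derivative q).natDegree ≤ p.natDegree - m - 1 := by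
      have := natDegree_derivative_le q
      omega
    have h2 : Multiset.card q.roots ≤ Multiset.card (derivative q).roots + 1 :=
      card_roots_le_derivative q
    have h3 : Multiset.card (derivative q).roots ≤ (derivative q).natDegree :=
      card_roots' _
    rw [Function.iterate_succ_apply', ← hq]
    constructor <;> omega

lemma qp_roots_card {k : ℕ} (hk : k ≤ n) (v : Fin n → ℝ) :
    Multiset.card (qp n k v).roots = k := by
  have hfac : ((Nat.factorial (n - k) : ℕ) : ℝ) • qp n k v = derivative^[n - k] (prodX v) := by
    have := congrFun (Polynomial.factorial_smul_hasseDeriv (R := ℝ) (n - k)) (prodX v)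
    rw [← this]
    simp only [LinearMap.smul_apply, qp]
    rw [Nat.cast_smul_eq_nsmul]
  have hcast : ((Nat.factorial (n - k) : ℕ) : ℝ) ≠ 0 := by
    exact_mod_cast (Nat.factorial_pos _).ne'
  have h1 : (qp n k v).roots = (derivative^[n - k] (prodX v)).roots := by
    rw [← hfac, roots_smul_nonzero _ hcast]
  rw [h1]
  have := (iter_deriv_realrooted (prodX v)
    (by rw [prodX_roots_card, prodX_natDegree]) (n - k)).2
  rw [this, prodX_natDegree]
  omega

lemma qp_splits {k : ℕ} (hk : k ≤ n) (v : Fin n → ℝ) :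
    Splits (qp n k v) := by
  rw [Polynomial.splits_iff_card_roots, qp_roots_card hk v, qp_natDegree hk v]

/-- any complex root of (the complexification of) a real split polynomial is real,
indeed one of its real roots -/
lemma exists_real_root (p : ℝ[X]) (hsp : Splits p) (hp : p ≠ 0) {z : ℂ}
    (hz : (p.map (algebraMap ℝ ℂ)).eval z = 0) : ∃ r ∈ p.roots, z = (r : ℂ) := by
  have hmap : p.map (algebraMap ℝ ℂ)
      = C ((p.leadingCoeff : ℝ) : ℂ) * (p.roots.map fun (r : ℝ) => X - C (r : ℂ)).prod := by
    conv_lhs => rw [hsp.eq_prod_roots]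
    rw [Polynomial.map_mul, map_C]
    have h2 : Polynomial.map (algebraMap ℝ ℂ) ((p.roots.map fun a => X - C a).prod)
        = (p.roots.map fun (r : ℝ) => X - C (r : ℂ)).prod := by
      rw [show Polynomial.map (algebraMap ℝ ℂ) ((p.roots.map fun a => X - C a).prod)
            = Polynomial.mapRingHom (algebraMap ℝ ℂ)
              ((p.roots.map fun a => X - C a).prod) from rfl,
          map_multiset_prod, Multiset.map_map]
      congr 1
      apply Multiset.map_congr rfl
      intro r _
      simp
    rw [h2]
    norm_cast
  have heval : (p.map (algebraMap ℝ ℂ)).eval z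
      = ((p.leadingCoeff : ℝ) : ℂ) * ((p.roots.map fun (r : ℝ) => z - (r : ℂ)).prod) := by
    rw [hmap, eval_mul, eval_C, eval_multiset_prod, Multiset.map_map]
    congr 2
    apply Multiset.map_congr rfl
    intro r _
    simp
  rw [heval] at hz
  rcases mul_eq_zero.mp hz with h | h
  · exact absurd h (by exact_mod_cast leadingCoeff_ne_zero.mpr hp)
  · obtain ⟨r, hr, hr0⟩ := Multiset.mem_map.mp (Multiset.prod_eq_zero_iff.mp h)
    exact ⟨r, hr, sub_eq_zero.mp hr0⟩

lemma eval_ne_of_realrooted (p : ℝ[X]) (hsp : Splits p) (hp : p ≠ 0) {z : ℂ}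
    (hz : z.im ≠ 0) : (p.map (algebraMap ℝ ℂ)).eval z ≠ 0 := by
  intro h
  obtain ⟨r, _, hr⟩ := exists_real_root p hsp hp h
  rw [hr] at hz
  simp at hz

/-- the polynomial `t ↦ eS n k (u + t·x)` -/
noncomputable def dirP {R : Type*} [CommSemiring R] (n k : ℕ) (u x : Fin n → R) : R[X] :=
  ∑ s ∈ Finset.powersetCard k (Finset.univ : Finset (Fin n)),
    ∏ i ∈ s, (C (x i) * X + C (u i))

lemma dirP_eval {R : Type*} [CommSemiring R] (k : ℕ) (u x : Fin n → R) (z : R) :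
    (dirP n k u x).eval z = eS n k (fun i => u i + x i * z) := by
  simp only [dirP, eS, eval_finset_sum, eval_prod, eval_add, eval_mul, eval_C, eval_X]
  refine Finset.sum_congr rfl fun s _ => Finset.prod_congr rfl fun i _ => by ring

lemma dirP_map {R S : Type*} [CommSemiring R] [CommSemiring S] (f : R →+* S) (k : ℕ)
    (u x : Fin n → R) :
    (dirP n k u x).map f = dirP n k (fun i => f (u i)) (fun i => f (x i)) := by
  simp [dirP, Polynomial.map_sum, Polynomial.map_prod]

lemma dirP_coeff {R : Type*} [CommSemiring R] (k : ℕ) (u x : Fin n → R) (j : ℕ) :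
    (dirP n k u x).coeff j = ∑ s ∈ Finset.powersetCard k (Finset.univ : Finset (Fin n)),
      ∑ t ∈ s.powerset.filter (fun t => t.card = j),
        (∏ i ∈ t, x i) * ∏ i ∈ s \ t, u i := by
  rw [dirP, finset_sum_coeff]
  refine Finset.sum_congr rfl fun s _ => ?_
  rw [Finset.prod_add, finset_sum_coeff, Finset.sum_filter]
  refine Finset.sum_congr rfl fun t _ => ?_
  have hterm : (∏ i ∈ t, (C (x i) * X)) * ∏ i ∈ s \ t, C (u i)
      = C ((∏ i ∈ t, x i) * ∏ i ∈ s \ t, u i) * X ^ t.card := by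
    rw [Finset.prod_mul_distrib, Finset.prod_const, map_mul, map_prod, map_prod]
    ring
  rw [hterm, coeff_C_mul, coeff_X_pow]
  by_cases h : t.card = j
  · simp [h]
  · simp only [h, if_false]
    rw [if_neg (fun hh => h hh.symm), mul_zero]

lemma dirP_coeff_eq_zero_of_gt {R : Type*} [CommSemiring R] {k j : ℕ} (hj : k < j)
    (u x : Fin n → R) : (dirP n k u x).coeff j = 0 := by
  rw [dirP_coeff]
  refine Finset.sum_eq_zero fun s hs => ?_
  have hcard := (Finset.mem_powersetCard.mp hs).2
  have : s.powerset.filter (fun t => t.card = j) = ∅ := by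
    refine Finset.filter_false_of_mem fun t ht => ?_
    have := Finset.card_le_card (Finset.mem_powerset.mp ht)
    omega
  rw [this, Finset.sum_empty]

lemma dirP_natDegree_le {R : Type*} [CommSemiring R] (k : ℕ) (u x : Fin n → R) :
    (dirP n k u x).natDegree ≤ k :=
  natDegree_le_iff_coeff_eq_zero.mpr fun _ hN => dirP_coeff_eq_zero_of_gt hN u x

lemma dirP_coeff_self {R : Type*} [CommSemiring R] (k : ℕ) (u x : Fin n → R) :
    (dirP n k u x).coeff k = eS n k x := by
  rw [dirP_coeff]
  refine Finset.sum_congr rfl fun s hs => ?_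
  have hcard := (Finset.mem_powersetCard.mp hs).2
  have hfil : s.powerset.filter (fun t => t.card = k) = {s} := by
    ext t
    simp only [Finset.mem_filter, Finset.mem_powerset, Finset.mem_singleton]
    constructor
    · rintro ⟨hsub, hc⟩
      exact Finset.eq_of_subset_of_card_le hsub (by omega)
    · rintro rfl
      exact ⟨Finset.Subset.refl _, hcard⟩
  rw [hfil, Finset.sum_singleton, Finset.sdiff_self]
  simp

lemma dirP_coeff_zero {R : Type*} [CommSemiring R] (k : ℕ) (u x : Fin n → R) :
    (dirP n k u x).coeff 0 = eS n k u := by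
  rw [dirP_coeff]
  refine Finset.sum_congr rfl fun s hs => ?_
  have hfil : s.powerset.filter (fun t => t.card = 0) = {∅} := by
    ext t
    simp only [Finset.mem_filter, Finset.mem_powerset, Finset.mem_singleton,
      Finset.card_eq_zero]
    exact ⟨fun h => h.2, fun h => ⟨by simp [h], by simp [h]⟩⟩
  rw [hfil, Finset.sum_singleton]
  simp

lemma dirP_coeff_continuous {R : Type*} [CommSemiring R] [TopologicalSpace R]
    [IsTopologicalSemiring R] (k j : ℕ) (x : Fin n → R) :
    Continuous fun u : Fin n → R => (dirP n k u x).coeff j := by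
  simp only [dirP_coeff]
  refine continuous_finset_sum _ fun s _ => continuous_finset_sum _ fun t _ => ?_
  exact continuous_const.mul (continuous_finset_prod _ fun i _ => continuous_apply i)

lemma eval_pos_of_coeff_nonneg (p : ℝ[X]) (h0 : 0 < p.coeff 0) (h : ∀ i, 0 ≤ p.coeff i)
    {t : ℝ} (ht : 0 ≤ t) : 0 < p.eval t := by
  rw [eval_eq_sum_range' (lt_add_one p.natDegree)]
  calc (0:ℝ) < p.coeff 0 * t ^ 0 := by simpa using h0
    _ ≤ ∑ i ∈ Finset.range (p.natDegree + 1), p.coeff i * t ^ i :=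
      Finset.single_le_sum (f := fun i => p.coeff i * t ^ i)
        (fun i _ => mul_nonneg (h i) (pow_nonneg ht i)) (by simp)

/-- positive real (as a predicate on complex numbers) -/
def PR (c : ℂ) : Prop := c.im = 0 ∧ 0 < c.re

lemma PR_real {a : ℝ} : PR (a : ℂ) ↔ 0 < a := by simp [PR]

lemma PR.add {a b : ℂ} (ha : PR a) (hb : PR b) : PR (a + b) := by
  obtain ⟨h1, h2⟩ := ha; obtain ⟨h3, h4⟩ := hb
  refine ⟨by simp [h1, h3], by simp; positivity⟩

lemma PR.mul {a b : ℂ} (ha : PR a) (hb : PR b) : PR (a * b) := by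
  obtain ⟨h1, h2⟩ := ha; obtain ⟨h3, h4⟩ := hb
  refine ⟨by simp [Complex.mul_im, h1, h3], by simp [Complex.mul_re, h1, h3]; positivity⟩

lemma PR_one : PR 1 := by simp [PR]

lemma PR_prod (s : Multiset ℂ) (h : ∀ a ∈ s, PR a) : PR s.prod := by
  induction s using Multiset.induction with
  | empty => simpa using PR_one
  | cons a t ih =>
    rw [Multiset.prod_cons]
    exact (h a (Multiset.mem_cons_self a t)).mul
      (ih fun b hb => h b (Multiset.mem_cons_of_mem hb))

lemma PR_sum (s : Multiset ℂ) (hs : s ≠ 0) (h : ∀ a ∈ s, PR a) : PR s.sum := by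
  induction s using Multiset.induction with
  | empty => exact absurd rfl hs
  | cons a t ih =>
    rw [Multiset.sum_cons]
    rcases eq_or_ne t 0 with rfl | ht
    · simpa using h a (Multiset.mem_cons_self a 0)
    · exact (h a (Multiset.mem_cons_self a t)).add
        (ih ht fun b hb => h b (Multiset.mem_cons_of_mem hb))

lemma PR_esymm (s : Multiset ℂ) (m : ℕ) (hm : m ≤ Multiset.card s)
    (h : ∀ a ∈ s, PR a) : PR (s.esymm m) := by
  rw [Multiset.esymm]
  apply PR_sum
  · intro hcontra
    have hc := congrArg Multiset.card hcontra
    rw [Multiset.card_map, Multiset.card_powersetCard, Multiset.card_zero] at hc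
    exact absurd hc (Nat.choose_pos hm).ne'
  · intro a ha
    obtain ⟨t, ht, rfl⟩ := Multiset.mem_map.mp ha
    have hle := (Multiset.mem_powersetCard.mp ht).1
    exact PR_prod t fun b hb => h b (Multiset.mem_of_le hle hb)

/-! ### Quantitative root-perturbation lemmas -/

lemma norm_multiset_prod' (s : Multiset ℂ) : ‖s.prod‖ = (s.map (fun z => ‖z‖)).prod := by
  induction s using Multiset.induction with
  | empty => simp
  | cons a t ih => simp [Multiset.prod_cons, norm_mul, ih]

lemma pow_card_le_prod_multiset (s : Multiset ℝ) {δ : ℝ} (hδ : 0 ≤ δ)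
    (h : ∀ a ∈ s, δ ≤ a) : δ ^ Multiset.card s ≤ s.prod := by
  induction s using Multiset.induction with
  | empty => simp
  | cons a t ih =>
    rw [Multiset.prod_cons, Multiset.card_cons, pow_succ]
    have h1 := ih (fun b hb => h b (Multiset.mem_cons_of_mem hb))
    have h2 := h a (Multiset.mem_cons_self a t)
    have hprod : (0:ℝ) ≤ t.prod := le_trans (pow_nonneg hδ _) h1
    calc δ ^ Multiset.card t * δ ≤ t.prod * a :=
          mul_le_mul h1 h2 hδ hprod
      _ = a * t.prod := mul_comm _ _

/-- lower bound for the evaluation of a complex polynomial far from its roots -/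
lemma eval_lower_bound {p : ℂ[X]} (hp : p ≠ 0) {z : ℂ} {δ : ℝ} (hδ : 0 ≤ δ)
    (h : ∀ w ∈ p.roots, δ ≤ ‖z - w‖) :
    ‖p.leadingCoeff‖ * δ ^ p.natDegree ≤ ‖p.eval z‖ := by
  have hsp : Splits p := IsAlgClosed.splits p
  have hcard : Multiset.card p.roots = p.natDegree := splits_iff_card_roots.mp hsp
  conv_rhs => rw [hsp.eq_prod_roots]
  rw [eval_mul, eval_C, norm_mul, eval_multiset_prod, Multiset.map_map]
  refine mul_le_mul_of_nonneg_left ?_ (norm_nonneg _)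
  rw [norm_multiset_prod', Multiset.map_map, ← hcard]
  have hmc : Multiset.card p.roots
      = Multiset.card (p.roots.map fun w => ‖(fun a => eval z (X - C a)) w‖) := by
    rw [Multiset.card_map]
  rw [hmc]
  apply pow_card_le_prod_multiset _ hδ
  intro a ha
  obtain ⟨w, hw, rfl⟩ := Multiset.mem_map.mp ha
  simpa using h w hw

lemma root_bound {p : ℂ[X]} {d : ℕ} (hd : 1 ≤ d) (hdeg : p.natDegree ≤ d) {z : ℂ}
    (hz : p.IsRoot z) (h1 : 1 ≤ ‖z‖) :
    ‖p.coeff d‖ * ‖z‖ ≤ ∑ j ∈ Finset.range d, ‖p.coeff j‖ := by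
  have he : p.eval z = ∑ j ∈ Finset.range (d + 1), p.coeff j * z ^ j :=
    eval_eq_sum_range' (by omega) z
  rw [Finset.sum_range_succ, Polynomial.IsRoot.eq_zero hz] at he
  have h0 : p.coeff d * z ^ d = -∑ j ∈ Finset.range d, p.coeff j * z ^ j := by
    linear_combination -he
  have hzpos : (0:ℝ) < ‖z‖ ^ (d - 1) := pow_pos (lt_of_lt_of_le one_pos h1) _
  have hnorm : ‖p.coeff d‖ * ‖z‖ ^ d ≤ (∑ j ∈ Finset.range d, ‖p.coeff j‖) * ‖z‖ ^ (d - 1) := by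
    calc ‖p.coeff d‖ * ‖z‖ ^ d = ‖p.coeff d * z ^ d‖ := by rw [norm_mul, norm_pow]
      _ = ‖∑ j ∈ Finset.range d, p.coeff j * z ^ j‖ := by rw [h0, norm_neg]
      _ ≤ ∑ j ∈ Finset.range d, ‖p.coeff j * z ^ j‖ := norm_sum_le _ _
      _ ≤ ∑ j ∈ Finset.range d, ‖p.coeff j‖ * ‖z‖ ^ (d - 1) := by
          refine Finset.sum_le_sum fun j hj => ?_
          rw [norm_mul, norm_pow]
          refine mul_le_mul_of_nonneg_left ?_ (norm_nonneg _)
          exact pow_le_pow_right₀ h1 (by have := Finset.mem_range.mp hj; omega)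
      _ = _ := by rw [← Finset.sum_mul]
  have hpow : ‖z‖ ^ d = ‖z‖ ^ (d - 1) * ‖z‖ := by
    rw [← pow_succ]
    congr 1
    omega
  rw [hpow] at hnorm
  have := le_of_mul_le_mul_right (a := ‖z‖ ^ (d - 1)) (by
    calc ‖p.coeff d‖ * ‖z‖ * ‖z‖ ^ (d - 1)
        = ‖p.coeff d‖ * (‖z‖ ^ (d - 1) * ‖z‖) := by ring
      _ ≤ (∑ j ∈ Finset.range d, ‖p.coeff j‖) * ‖z‖ ^ (d - 1) := hnorm) hzpos
  linarith [this]

/-- if the limit polynomial has all roots in the open lower half plane, then eventually so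
do the approximants -/
lemma main_open {ι : Type*} {l : Filter ι} {F : ι → ℂ[X]} {Q : ℂ[X]} {k : ℕ} (hk : 1 ≤ k)
    (hQl : Q.coeff k ≠ 0) (hQdeg : Q.natDegree ≤ k)
    (hFdeg : ∀ i, (F i).natDegree ≤ k)
    (hcoeff : ∀ j, j ≤ k → Tendsto (fun i => (F i).coeff j) l (𝓝 (Q.coeff j)))
    (hroots : ∀ w ∈ Q.roots, w.im < 0) :
    ∀ᶠ i in l, ∀ z ∈ (F i).roots, z.im < 0 := by
  have hQdeg' : Q.natDegree = k := le_antisymm hQdeg (le_natDegree_of_ne_zero hQl)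
  have hQ0 : Q ≠ 0 := fun h => hQl (by simp [h])
  have hcard : Multiset.card Q.roots = k := by
    rw [splits_iff_card_roots.mp (IsAlgClosed.splits Q), hQdeg']
  have hne : Q.roots.toFinset.Nonempty := by
    have hroots0 : Q.roots ≠ 0 := by
      intro h
      rw [h] at hcard
      simp at hcard
      omega
    obtain ⟨a, ha⟩ := Multiset.exists_mem_of_ne_zero hroots0
    exact ⟨a, Multiset.mem_toFinset.mpr ha⟩
  set δ : ℝ := Q.roots.toFinset.inf' hne (fun w => -w.im) with hδdef
  have hδpos : 0 < δ := by
    rw [hδdef, Finset.lt_inf'_iff]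
    intro w hw
    have := hroots w (Multiset.mem_toFinset.mp hw)
    linarith
  have hδle : ∀ w ∈ Q.roots, w.im ≤ -δ := by
    intro w hw
    have := Finset.inf'_le (f := fun w : ℂ => -w.im) (Multiset.mem_toFinset.mpr hw)
    linarith [this]
  set Sc : ℝ := ∑ j ∈ Finset.range k, ‖Q.coeff j‖ with hScdef
  have hScnn : 0 ≤ Sc := Finset.sum_nonneg fun j _ => norm_nonneg _
  set L : ℝ := ‖Q.coeff k‖ with hLdef
  have hLpos : 0 < L := norm_pos_iff.mpr hQl
  set R : ℝ := max 1 ((Sc + k) / (L / 2)) with hRdef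
  have hR1 : (1:ℝ) ≤ R := le_max_left _ _
  have hRpos : (0:ℝ) < R := lt_of_lt_of_le one_pos hR1
  set ε : ℝ := min (min 1 (L / 2)) (L * δ ^ k / (2 * (k + 1) * R ^ k)) with hεdef
  have hεpos : 0 < ε := by
    apply lt_min (lt_min one_pos (by positivity))
    positivity
  have hε1 : ε ≤ 1 := le_trans (min_le_left _ _) (min_le_left _ _)
  have hεL : ε ≤ L / 2 := le_trans (min_le_left _ _) (min_le_right _ _)
  have hεδ : ε ≤ L * δ ^ k / (2 * (k + 1) * R ^ k) := min_le_right _ _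
  have hev : ∀ᶠ i in l, ∀ j ∈ Finset.range (k + 1), ‖(F i).coeff j - Q.coeff j‖ < ε := by
    rw [Filter.eventually_all_finset]
    intro j hj
    have h1 := hcoeff j (by have := Finset.mem_range.mp hj; omega)
    have h2 := Metric.tendsto_nhds.mp h1 ε hεpos
    filter_upwards [h2] with i hi
    rwa [dist_eq_norm] at hi
  filter_upwards [hev] with i hi
  intro z hz
  by_contra him
  push_neg at him
  have hzroot : (F i).IsRoot z := (mem_roots'.mp hz).2
  have hFk : L / 2 ≤ ‖(F i).coeff k‖ := by
    have hjk := (hi k (by simp)).le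
    have htri : ‖Q.coeff k‖ - ‖(F i).coeff k‖ ≤ ‖(F i).coeff k - Q.coeff k‖ := by
      rw [norm_sub_rev]
      exact norm_sub_norm_le _ _
    linarith
  have hzR : ‖z‖ ≤ R := by
    rcases le_or_gt ‖z‖ 1 with h | h
    · exact le_trans h hR1
    · have hb := root_bound hk (hFdeg i) hzroot h.le
      have hsum : ∑ j ∈ Finset.range k, ‖(F i).coeff j‖ ≤ Sc + k := by
        have hstep : ∀ j ∈ Finset.range k, ‖(F i).coeff j‖ ≤ ‖Q.coeff j‖ + 1 := by
          intro j hj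
          have hj' : j ∈ Finset.range (k + 1) := by
            have := Finset.mem_range.mp hj
            exact Finset.mem_range.mpr (by omega)
          have h1 := (hi j hj').le
          have htri : ‖(F i).coeff j‖ - ‖Q.coeff j‖ ≤ ‖(F i).coeff j - Q.coeff j‖ :=
            norm_sub_norm_le _ _
          linarith
        calc ∑ j ∈ Finset.range k, ‖(F i).coeff j‖
            ≤ ∑ j ∈ Finset.range k, (‖Q.coeff j‖ + 1) := Finset.sum_le_sum hstep
          _ = Sc + k := by rw [Finset.sum_add_distrib, Finset.sum_const, Finset.card_range,
              nsmul_eq_mul, mul_one]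
      have hL2z : L / 2 * ‖z‖ ≤ Sc + k := by
        calc L / 2 * ‖z‖ ≤ ‖(F i).coeff k‖ * ‖z‖ :=
              mul_le_mul_of_nonneg_right hFk (norm_nonneg _)
          _ ≤ ∑ j ∈ Finset.range k, ‖(F i).coeff j‖ := hb
          _ ≤ Sc + k := hsum
      calc ‖z‖ = L / 2 * ‖z‖ / (L / 2) := by field_simp
        _ ≤ (Sc + k) / (L / 2) := by gcongr
        _ ≤ R := le_max_right _ _
  have hLB : L * δ ^ k ≤ ‖Q.eval z‖ := by
    have h1 : ∀ w ∈ Q.roots, δ ≤ ‖z - w‖ := by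
      intro w hw
      calc δ ≤ z.im - w.im := by have := hδle w hw; linarith
        _ ≤ |(z - w).im| := by rw [Complex.sub_im]; exact le_abs_self _
        _ ≤ ‖z - w‖ := by
            exact Complex.abs_im_le_norm _
    have h2 := eval_lower_bound hQ0 hδpos.le h1
    rwa [Polynomial.leadingCoeff, hQdeg'] at h2
  have hUB : ‖Q.eval z‖ ≤ (k + 1) * ε * R ^ k := by
    have hQe : Q.eval z = ∑ j ∈ Finset.range (k + 1), Q.coeff j * z ^ j :=
      eval_eq_sum_range' (by omega) z
    have hFe : (0:ℂ) = ∑ j ∈ Finset.range (k + 1), (F i).coeff j * z ^ j := by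
      rw [← eval_eq_sum_range' (by have := hFdeg i; omega : (F i).natDegree < k + 1) z]
      exact (Polynomial.IsRoot.eq_zero hzroot).symm
    have hdiff : Q.eval z
        = ∑ j ∈ Finset.range (k + 1), (Q.coeff j - (F i).coeff j) * z ^ j := by
      rw [hQe]
      have hsub : ∑ j ∈ Finset.range (k + 1), (Q.coeff j - (F i).coeff j) * z ^ j
          = ∑ j ∈ Finset.range (k + 1), Q.coeff j * z ^ j
            - ∑ j ∈ Finset.range (k + 1), (F i).coeff j * z ^ j := by
        rw [← Finset.sum_sub_distrib]
        refine Finset.sum_congr rfl fun j _ => by ring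
      rw [hsub, ← hFe, sub_zero]
    calc ‖Q.eval z‖ = ‖∑ j ∈ Finset.range (k + 1), (Q.coeff j - (F i).coeff j) * z ^ j‖ := by
          rw [hdiff]
      _ ≤ ∑ j ∈ Finset.range (k + 1), ‖(Q.coeff j - (F i).coeff j) * z ^ j‖ :=
          norm_sum_le _ _
      _ ≤ ∑ j ∈ Finset.range (k + 1), ε * R ^ k := by
          refine Finset.sum_le_sum fun j hj => ?_
          rw [norm_mul, norm_pow]
          have h1 : ‖Q.coeff j - (F i).coeff j‖ ≤ ε := by
            rw [norm_sub_rev]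
            exact (hi j hj).le
          have h2 : ‖z‖ ^ j ≤ R ^ k := by
            calc ‖z‖ ^ j ≤ R ^ j := pow_le_pow_left₀ (norm_nonneg _) hzR j
              _ ≤ R ^ k := pow_le_pow_right₀ hR1 (by have := Finset.mem_range.mp hj; omega)
          exact mul_le_mul h1 h2 (by positivity) hεpos.le
      _ = (k + 1) * ε * R ^ k := by
          rw [Finset.sum_const, Finset.card_range, nsmul_eq_mul]
          push_cast
          ring
  have hfinal : (k + 1 : ℝ) * ε * R ^ k ≤ L * δ ^ k / 2 := by
    have hRk : (0:ℝ) < R ^ k := by positivity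
    calc (k + 1 : ℝ) * ε * R ^ k
        ≤ (k + 1 : ℝ) * (L * δ ^ k / (2 * (k + 1) * R ^ k)) * R ^ k := by
          apply mul_le_mul_of_nonneg_right (mul_le_mul_of_nonneg_left hεδ (by positivity)) hRk.le
      _ = L * δ ^ k / 2 := by field_simp
  have hpos : 0 < L * δ ^ k := by positivity
  linarith

/-- if the approximants have all roots in the open lower half plane, then the limit
polynomial has roots only in the closed lower half plane -/
lemma main_closed {ι : Type*} {l : Filter ι} [l.NeBot] {F : ι → ℂ[X]} {Q : ℂ[X]} {k : ℕ}
    {A : ℂ} (hA : A ≠ 0)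
    (hFdeg : ∀ i, (F i).natDegree ≤ k)
    (hFl : ∀ i, (F i).coeff k = A)
    (hcoeff : ∀ j, j ≤ k → Tendsto (fun i => (F i).coeff j) l (𝓝 (Q.coeff j)))
    (hQdeg : Q.natDegree ≤ k)
    (hroots : ∀ᶠ i in l, ∀ w ∈ (F i).roots, w.im < 0)
    {z₀ : ℂ} (hz : Q.IsRoot z₀) : z₀.im ≤ 0 := by
  by_contra him
  push_neg at him
  have hFdeg' : ∀ i, (F i).natDegree = k := fun i =>
    le_antisymm (hFdeg i) (le_natDegree_of_ne_zero (by rw [hFl i]; exact hA))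
  have hLB : ∀ᶠ i in l, ‖A‖ * z₀.im ^ k ≤ ‖(F i).eval z₀‖ := by
    filter_upwards [hroots] with i hri
    have hFi0 : F i ≠ 0 := fun h => hA (by rw [← hFl i, h]; simp)
    have h1 : ∀ w ∈ (F i).roots, z₀.im ≤ ‖z₀ - w‖ := by
      intro w hw
      calc z₀.im ≤ z₀.im - w.im := by have := hri w hw; linarith
        _ ≤ |(z₀ - w).im| := by rw [Complex.sub_im]; exact le_abs_self _
        _ ≤ ‖z₀ - w‖ := by
            exact Complex.abs_im_le_norm _
    have h2 := eval_lower_bound hFi0 him.le h1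
    rwa [Polynomial.leadingCoeff, hFdeg' i, hFl i] at h2
  have hev : Tendsto (fun i => (F i).eval z₀) l (𝓝 (Q.eval z₀)) := by
    have h1 : (fun i => (F i).eval z₀)
        = fun i => ∑ j ∈ Finset.range (k + 1), (F i).coeff j * z₀ ^ j :=
      funext fun i => eval_eq_sum_range' (by have := hFdeg i; omega) z₀
    rw [h1, show Q.eval z₀ = ∑ j ∈ Finset.range (k + 1), Q.coeff j * z₀ ^ j from
      eval_eq_sum_range' (by omega) z₀]
    exact tendsto_finset_sum _ fun j hj =>
      (hcoeff j (by have := Finset.mem_range.mp hj; omega)).mul tendsto_const_nhds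
  have h4 : ‖A‖ * z₀.im ^ k ≤ ‖Q.eval z₀‖ := ge_of_tendsto hev.norm hLB
  rw [Polynomial.IsRoot.eq_zero hz, norm_zero] at h4
  have h5 : 0 < ‖A‖ * z₀.im ^ k := mul_pos (norm_pos_iff.mpr hA) (pow_pos him k)
  linarith

/-- continuous induction on an interval -/
lemma clopen_Icc {P : ℝ → Prop} {a b : ℝ}
    (hne : ∃ x ∈ Set.Icc a b, P x)
    (hopen : ∀ c ∈ Set.Icc a b, P c → ∀ᶠ x in 𝓝 c, P x)
    (hclosed : ∀ c ∈ Set.Icc a b,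
      (𝓝[{x | x ∈ Set.Icc a b ∧ P x} \ {c}] c).NeBot → P c) :
    ∀ x ∈ Set.Icc a b, P x := by
  classical
  set E : Set ℝ := {x | x ∈ Set.Icc a b ∧ P x} with hE
  have hEsub : E ⊆ Set.Icc a b := fun x hx => hx.1
  have hEclosed : IsClosed E := by
    rw [← closure_subset_iff_isClosed]
    intro x hx
    have hxI : x ∈ Set.Icc a b :=
      (isClosed_Icc.closure_subset_iff.mpr hEsub) hx
    by_cases hxE : x ∈ E
    · exact hxE
    · have hdiff : E \ {x} = E := Set.diff_singleton_eq_self hxE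
      have hnb : (𝓝[E \ {x}] x).NeBot := by
        rw [hdiff]
        exact mem_closure_iff_nhdsWithin_neBot.mp hx
      exact ⟨hxI, hclosed x hxI hnb⟩
  by_contra hcon
  push_neg at hcon
  obtain ⟨x₀, hx₀I, hx₀⟩ := hcon
  have hprec : IsPreconnected (Set.Icc a b) := isPreconnected_Icc
  have hcover : Set.Icc a b ⊆ E ∪ closure (Set.Icc a b \ E) := by
    intro x hx
    by_cases hPx : P x
    · exact Or.inl ⟨hx, hPx⟩
    · exact Or.inr (subset_closure ⟨hx, fun hxE => hPx hxE.2⟩)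
  have hne1 : (Set.Icc a b ∩ E).Nonempty := by
    obtain ⟨x, hxI, hxP⟩ := hne
    exact ⟨x, hxI, hxI, hxP⟩
  have hne2 : (Set.Icc a b ∩ closure (Set.Icc a b \ E)).Nonempty :=
    ⟨x₀, hx₀I, subset_closure ⟨hx₀I, fun hxE => hx₀ hxE.2⟩⟩
  obtain ⟨c, hcI, hcE, hcC⟩ := isPreconnected_closed_iff.mp hprec E
    (closure (Set.Icc a b \ E)) hEclosed isClosed_closure hcover hne1 hne2
  have hPev : ∀ᶠ x in 𝓝 c, P x := hopen c hcI hcE.2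
  have hnb : (𝓝[Set.Icc a b \ E] c).NeBot := mem_closure_iff_nhdsWithin_neBot.mp hcC
  have h1 : ∀ᶠ x in 𝓝[Set.Icc a b \ E] c, P x := eventually_nhdsWithin_of_eventually_nhds hPev
  have h2 : ∀ᶠ x in 𝓝[Set.Icc a b \ E] c, x ∈ Set.Icc a b \ E := eventually_mem_nhdsWithin
  obtain ⟨y, hy1, hy2⟩ := (h1.and h2).exists
  exact hy2.2 ⟨hy2.1, hy1⟩


/-! ### The hyperbolicity theorem -/

lemma qp_ne_zero {k : ℕ} (hk : k ≤ n) (v : Fin n → ℝ) : qp n k v ≠ 0 := by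
  intro h
  have := qp_coeff_top hk v
  rw [h, coeff_zero] at this
  exact absurd this.symm (by exact_mod_cast (Nat.choose_pos (Nat.sub_le n k)).ne')

lemma qp_roots_neg {k : ℕ} (hk : k ≤ n) {x : Fin n → ℝ}
    (HX : ∀ j, j ≤ k → 0 < eS n j x) : ∀ r ∈ (qp n k x).roots, r < 0 := by
  intro r hr
  by_contra hrn
  push_neg at hrn
  have hroot : (qp n k x).IsRoot r := (mem_roots'.mp hr).2
  have hpos : 0 < (qp n k x).eval r := by
    apply eval_pos_of_coeff_nonneg _ _ _ hrn
    · rw [qp_coeff hk x (Nat.zero_le k), Nat.sub_zero]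
      have h1 : (0:ℝ) < ((0 + (n - k)).choose (n - k) : ℝ) := by
        exact_mod_cast Nat.choose_pos (by omega)
      exact mul_pos h1 (HX k le_rfl)
    · intro i
      rcases le_or_gt i k with hik | hik
      · rw [qp_coeff hk x hik]
        have h1 : (0:ℝ) ≤ ((i + (n - k)).choose (n - k) : ℝ) := by positivity
        exact mul_nonneg h1 (HX (k - i) (by omega)).le
      · rw [qp_coeff_zero_of_gt hk x hik]
  rw [Polynomial.IsRoot.eq_zero hroot] at hpos
  exact lt_irrefl _ hpos

lemma conj_root_of_real {p : ℝ[X]} {z : ℂ}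
    (hz : (p.map (algebraMap ℝ ℂ)).eval z = 0) :
    (p.map (algebraMap ℝ ℂ)).eval ((starRingEnd ℂ) z) = 0 := by
  rw [eval_map] at hz ⊢
  have hcomp : (starRingEnd ℂ).comp (algebraMap ℝ ℂ) = algebraMap ℝ ℂ :=
    RingHom.ext fun r => Complex.conj_ofReal r
  rw [← hcomp, ← Polynomial.hom_eval₂, hz, map_zero]

set_option maxHeartbeats 1600000 in
/-- Gårding's hyperbolicity theorem for elementary symmetric polynomials:
if all `eS j x > 0` then for every real `u`, all complex roots of
`t ↦ eS (u + t x)` are real. -/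
lemma hyp_main {k : ℕ} (hk1 : 1 ≤ k) (hkn : k ≤ n) {x : Fin n → ℝ}
    (HX : ∀ j, j ≤ k → 0 < eS n j x) (u : Fin n → ℝ) :
    ∀ z ∈ (dirP n k (fun i => (u i : ℂ)) (fun i => (x i : ℂ))).roots, z.im = 0 := by
  set xc : Fin n → ℂ := fun i => (x i : ℂ) with hxc
  set uc : Fin n → ℂ := fun i => (u i : ℂ) with huc
  have hxcalg : (fun i => algebraMap ℝ ℂ (x i)) = xc := funext fun i => by
    simp [hxc]
  have hA : eS n k xc = ((eS n k x : ℝ) : ℂ) := by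
    rw [← hxcalg, ← eS_map]
    simp
  have hA0 : eS n k xc ≠ 0 := by
    rw [hA]
    exact_mod_cast (HX k le_rfl).ne'
  set Gl : ℝ → ℂ[X] := fun lam => dirP n k (fun i => uc i + lam * Complex.I) xc with hGl
  have step_b : ∀ lam : ℝ, lam ≠ 0 → ∀ w : Fin n → ℝ, ∀ t : ℝ,
      eS n k (fun i => ((w i : ℂ)) + lam * Complex.I + xc i * t) ≠ 0 := by
    intro lam hlam w t
    have hw : (fun i => ((w i : ℂ)) + lam * Complex.I + xc i * t)
        = fun i => ((w i + x i * t : ℝ) : ℂ) + (lam * Complex.I) := by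
      funext i
      push_cast
      ring
    rw [hw, eS_shift' hkn]
    have hqm : qp n k (fun i => ((w i + x i * t : ℝ) : ℂ))
        = (qp n k (fun i => w i + x i * t)).map (algebraMap ℝ ℂ) := by
      rw [qp_map]
      congr 1
    rw [hqm]
    apply eval_ne_of_realrooted _ (qp_splits hkn _) (qp_ne_zero hkn _)
    simp [hlam]
  have step_b' : ∀ lam : ℝ, lam ≠ 0 → ∀ t : ℝ, (Gl lam).eval (t : ℂ) ≠ 0 := by
    intro lam hlam t
    rw [hGl, dirP_eval]
    exact step_b lam hlam u t
  have hGlk : ∀ lam : ℝ, (Gl lam).coeff k = eS n k xc := fun lam => dirP_coeff_self k _ xc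
  have hGldeg : ∀ lam : ℝ, (Gl lam).natDegree ≤ k := fun lam => dirP_natDegree_le k _ xc
  have hGlcont : ∀ j : ℕ, Continuous fun lam : ℝ => (Gl lam).coeff j := by
    intro j
    apply (dirP_coeff_continuous k j xc).comp
    exact continuous_pi fun i => continuous_const.add
      ((Complex.continuous_ofReal).mul continuous_const)
  set PA : ℝ → Prop := fun lam => ∀ z ∈ (Gl lam).roots, z.im < 0 with hPA
  have step_c : ∃ L : ℝ, 0 < L ∧ PA L := by
    set Hinf : ℂ[X] := dirP n k (fun _ : Fin n => Complex.I) xc with hHinf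
    have hHinfk : Hinf.coeff k = eS n k xc := dirP_coeff_self k _ xc
    have hHroots : ∀ w ∈ Hinf.roots, w.im < 0 := by
      intro w hw
      have heval : eS n k (fun i => Complex.I + xc i * w) = 0 := by
        rw [← dirP_eval]
        exact (mem_roots'.mp hw).2
      have hw0 : w ≠ 0 := by
        intro h
        rw [h] at heval
        simp only [mul_zero, add_zero] at heval
        rw [eS_const] at heval
        rcases mul_eq_zero.mp heval with h1 | h1
        · exact absurd h1 (by exact_mod_cast (Nat.choose_pos hkn).ne')
        · exact absurd h1 (pow_ne_zero k Complex.I_ne_zero)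
      have hfact : (fun i => Complex.I + xc i * w)
          = fun i => w * (xc i + Complex.I * w⁻¹) := by
        funext i
        field_simp
        ring
      rw [hfact, eS_smul] at heval
      have heval2 : eS n k (fun i => xc i + Complex.I * w⁻¹) = 0 := by
        rcases mul_eq_zero.mp heval with h1 | h1
        · exact absurd h1 (pow_ne_zero k hw0)
        · exact h1
      have hqxc : qp n k xc = (qp n k x).map (algebraMap ℝ ℂ) := by
        rw [qp_map]
        congr 1
      rw [eS_shift' hkn, hqxc] at heval2
      obtain ⟨r, hr, hrw⟩ := exists_real_root _ (qp_splits hkn x) (qp_ne_zero hkn x) heval2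
      have hrneg : r < 0 := qp_roots_neg hkn HX r hr
      have hr0 : (r : ℂ) ≠ 0 := by exact_mod_cast hrneg.ne
      have h1 : Complex.I = (r : ℂ) * w := by
        have h2 := congrArg (fun t => t * w) hrw
        simpa [mul_assoc, inv_mul_cancel₀ hw0] using h2
      have hwv : w = Complex.I * ((r : ℂ))⁻¹ := by
        rw [h1, mul_comm (r : ℂ) w, mul_assoc, mul_inv_cancel₀ hr0, mul_one]
      have him : (Complex.I * ((r : ℂ))⁻¹).im = r⁻¹ := by
        rw [← Complex.ofReal_inv]
        simp [Complex.mul_im]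
      rw [hwv, him]
      exact inv_lt_zero.mpr hrneg
    set Hl : ℝ → ℂ[X] := fun lam => dirP n k (fun i => uc i * (lam : ℂ)⁻¹ + Complex.I) xc
      with hHl
    have hHlk : ∀ lam : ℝ, (Hl lam).coeff k = eS n k xc := fun lam => dirP_coeff_self k _ xc
    have hHlcoeff : ∀ j, j ≤ k →
        Tendsto (fun lam : ℝ => (Hl lam).coeff j) atTop (𝓝 (Hinf.coeff j)) := by
      intro j _
      have hvec : Tendsto (fun lam : ℝ => (fun i => uc i * (lam : ℂ)⁻¹ + Complex.I))
          atTop (𝓝 (fun _ : Fin n => Complex.I)) := by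
        rw [tendsto_pi_nhds]
        intro i
        have h1 : Tendsto (fun lam : ℝ => ((lam : ℂ))⁻¹) atTop (𝓝 0) := by
          have h2 : Tendsto (fun lam : ℝ => ((lam⁻¹ : ℝ) : ℂ)) atTop (𝓝 ((0:ℝ):ℂ)) :=
            (Complex.continuous_ofReal.tendsto 0).comp tendsto_inv_atTop_zero
          simpa using h2
        have h3 := (tendsto_const_nhds (x := uc i) (f := atTop)).mul h1
        simpa using h3.add (tendsto_const_nhds (x := Complex.I) (f := atTop))
      exact ((dirP_coeff_continuous k j xc).tendsto _).comp hvec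
    have hEV := main_open hk1 (by rw [hHinfk]; exact hA0) (dirP_natDegree_le k _ xc)
      (fun lam => dirP_natDegree_le k _ xc) hHlcoeff hHroots
    obtain ⟨L, hL⟩ := (hEV.and (eventually_gt_atTop 0)).exists
    refine ⟨L, hL.2, ?_⟩
    intro z hz
    have hL0 : ((L : ℝ) : ℂ) ≠ 0 := by exact_mod_cast hL.2.ne'
    have hzeval : (Gl L).eval z = 0 := (mem_roots'.mp hz).2
    have hHleval : (Hl L).eval (z * (L : ℂ)⁻¹) = 0 := by
      rw [hHl, dirP_eval]
      have hfact : (fun i => (uc i * (L : ℂ)⁻¹ + Complex.I) + xc i * (z * (L : ℂ)⁻¹))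
          = fun i => ((L : ℂ))⁻¹ * (uc i + L * Complex.I + xc i * z) := by
        funext i
        field_simp
      rw [hfact, eS_smul]
      have hz2 : eS n k (fun i => uc i + L * Complex.I + xc i * z) = 0 := by
        rw [← dirP_eval]
        exact hzeval
      rw [hz2, mul_zero]
    have hHl0 : Hl L ≠ 0 := fun h => hA0 (by rw [← hHlk L, h, coeff_zero])
    have hmem : z * (L : ℂ)⁻¹ ∈ (Hl L).roots := mem_roots'.mpr ⟨hHl0, hHleval⟩
    have him := hL.1 _ hmem
    have hzw : z = (L : ℂ) * (z * (L : ℂ)⁻¹) := by field_simp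
    have himz : z.im = L * (z * (L : ℂ)⁻¹).im := by
      conv_lhs => rw [hzw]
      simp [Complex.mul_im]
    rw [himz]
    exact mul_neg_of_pos_of_neg hL.2 him
  obtain ⟨L, hLpos, hPAL⟩ := step_c
  have hPAIoc : ∀ lam ∈ Set.Ioc (0:ℝ) L, PA lam := by
    intro lam0 hlam0
    have key : ∀ lam ∈ Set.Icc lam0 L, PA lam := by
      apply clopen_Icc
      · exact ⟨L, ⟨hlam0.2, le_rfl⟩, hPAL⟩
      · intro c hc hPAc
        exact main_open hk1 (by rw [hGlk c]; exact hA0) (hGldeg c) (fun lam => hGldeg lam)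
          (fun j _ => ((hGlcont j).tendsto c)) hPAc
      · intro c hc hnb
        haveI := hnb
        have hc0 : (0:ℝ) < c := lt_of_lt_of_le hlam0.1 hc.1
        have hcoeffc : ∀ j, j ≤ k → Tendsto (fun lam : ℝ => (Gl lam).coeff j)
            (𝓝[{xx | xx ∈ Set.Icc lam0 L ∧ PA xx} \ {c}] c) (𝓝 ((Gl c).coeff j)) :=
          fun j _ => ((hGlcont j).tendsto c).mono_left nhdsWithin_le_nhds
        have hrootsc : ∀ᶠ lam in 𝓝[{xx | xx ∈ Set.Icc lam0 L ∧ PA xx} \ {c}] c,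
            ∀ w ∈ (Gl lam).roots, w.im < 0 := by
          filter_upwards [eventually_mem_nhdsWithin] with lam hmem
          exact hmem.1.2
        have him : ∀ z₀ ∈ (Gl c).roots, z₀.im ≤ 0 := fun z₀ hz₀ =>
          main_closed (A := eS n k xc) hA0 (fun lam => hGldeg lam) (fun lam => hGlk lam)
            hcoeffc (hGldeg c) hrootsc ((mem_roots'.mp hz₀).2)
        intro z₀ hz₀
        rcases lt_or_eq_of_le (him z₀ hz₀) with h | h
        · exact h
        · exfalso
          have hz0re : ((z₀.re : ℝ) : ℂ) = z₀ := Complex.ext (by simp) (by simp [h])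
          have hb := step_b' c hc0.ne' z₀.re
          rw [hz0re] at hb
          exact hb ((mem_roots'.mp hz₀).2)
    exact key lam0 ⟨le_rfl, hlam0.2⟩
  have hvec0 : (fun i => uc i + ((0:ℝ):ℂ) * Complex.I) = uc := by
    funext i
    simp
  have hG0 : Gl 0 = dirP n k uc xc := by
    simp only [hGl]
    rw [hvec0]
  have hlimroots : ∀ z₀ ∈ (dirP n k uc xc).roots, z₀.im ≤ 0 := by
    intro z₀ hz₀
    have hnb : (𝓝[Set.Ioc (0:ℝ) L] (0:ℝ)).NeBot := by
      apply mem_closure_iff_nhdsWithin_neBot.mp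
      rw [closure_Ioc hLpos.ne]
      exact ⟨le_rfl, hLpos.le⟩
    have hcoeff0 : ∀ j, j ≤ k → Tendsto (fun lam : ℝ => (Gl lam).coeff j)
        (𝓝[Set.Ioc (0:ℝ) L] (0:ℝ)) (𝓝 ((dirP n k uc xc).coeff j)) := by
      intro j _
      have h1 := ((hGlcont j).tendsto 0).mono_left
        (nhdsWithin_le_nhds : 𝓝[Set.Ioc (0:ℝ) L] (0:ℝ) ≤ 𝓝 0)
      rwa [hG0] at h1
    have hroots' : ∀ᶠ lam in 𝓝[Set.Ioc (0:ℝ) L] (0:ℝ),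
        ∀ w ∈ (Gl lam).roots, w.im < 0 := by
      filter_upwards [eventually_mem_nhdsWithin] with lam hmem
      exact hPAIoc lam hmem
    exact main_closed (A := eS n k xc) hA0 (fun lam => hGldeg lam) (fun lam => hGlk lam)
      hcoeff0 (dirP_natDegree_le k uc xc) hroots' ((mem_roots'.mp hz₀).2)
  intro z hz
  have h1 : z.im ≤ 0 := hlimroots z hz
  have hucalg : (fun i => algebraMap ℝ ℂ (u i)) = uc := funext fun i => by
    simp [huc]
  have hG0map : dirP n k uc xc = (dirP n k u x).map (algebraMap ℝ ℂ) := by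
    rw [dirP_map, hucalg, hxcalg]
  have hzc : (starRingEnd ℂ) z ∈ (dirP n k uc xc).roots := by
    rw [hG0map] at hz ⊢
    rw [mem_roots'] at hz ⊢
    exact ⟨hz.1, conj_root_of_real hz.2⟩
  have h2 : ((starRingEnd ℂ) z).im ≤ 0 := hlimroots _ hzc
  rw [Complex.conj_im] at h2
  linarith


/-! ### Positivity of the coefficients of `dirP` -/

lemma map_eval_coe (p : ℝ[X]) (t : ℝ) :
    (p.map (algebraMap ℝ ℂ)).eval ((t : ℝ) : ℂ) = ((p.eval t : ℝ) : ℂ) := by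
  rw [eval_map, show ((t : ℝ) : ℂ) = algebraMap ℝ ℂ t by simp, eval₂_at_apply]
  simp

set_option maxHeartbeats 800000 in
lemma dirP_coeff_pos_of_nonneg {k : ℕ} (hk1 : 1 ≤ k) (hkn : k ≤ n) {x w : Fin n → ℝ}
    (HX : ∀ j, j ≤ k → 0 < eS n j x)
    (hw : 0 < eS n k w)
    (hnn : ∀ j, j ≤ k → 0 ≤ (dirP n k w x).coeff j) :
    ∀ j, j ≤ k → 0 < (dirP n k w x).coeff j := by
  set D : ℂ[X] := dirP n k (fun i => (w i : ℂ)) (fun i => (x i : ℂ)) with hD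
  have hmap : D = (dirP n k w x).map (algebraMap ℝ ℂ) := by
    rw [hD, dirP_map]
    congr 1 <;> · funext i; simp
  have hreal : ∀ z ∈ D.roots, z.im = 0 := hyp_main hk1 hkn HX w
  have hDk : D.coeff k = ((eS n k x : ℝ) : ℂ) := by
    rw [hD, dirP_coeff_self]
    rw [show (fun i => ((x i : ℝ) : ℂ)) = fun i => algebraMap ℝ ℂ (x i) by funext i; simp,
      ← eS_map]
    simp
  have hDk0 : D.coeff k ≠ 0 := by
    rw [hDk]
    exact_mod_cast (HX k le_rfl).ne'
  have hD0 : D ≠ 0 := fun h => hDk0 (by rw [h, coeff_zero])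
  have hdeg : D.natDegree = k :=
    le_antisymm (hD ▸ dirP_natDegree_le k _ _) (le_natDegree_of_ne_zero hDk0)
  have hneg : ∀ z ∈ D.roots, z.re < 0 := by
    intro z hz
    by_contra h
    push_neg at h
    have hz0 : ((z.re : ℝ) : ℂ) = z := Complex.ext (by simp) (by simp [hreal z hz])
    have heval : (dirP n k w x).eval z.re = 0 := by
      have h2 := (mem_roots'.mp hz).2
      rw [Polynomial.IsRoot, hmap, ← hz0, map_eval_coe] at h2
      exact_mod_cast h2
    have hpos : 0 < (dirP n k w x).eval z.re := by
      apply eval_pos_of_coeff_nonneg _ _ _ h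
      · rw [dirP_coeff_zero]
        exact hw
      · intro i
        rcases le_or_gt i k with hik | hik
        · exact hnn i hik
        · rw [dirP_coeff_eq_zero_of_gt hik]
    rw [heval] at hpos
    exact lt_irrefl _ hpos
  have hsp : Splits D := IsAlgClosed.splits D
  have hcard : Multiset.card D.roots = k := by rw [splits_iff_card_roots.mp hsp, hdeg]
  have hfac := hsp.eq_prod_roots
  have hlc : D.leadingCoeff = ((eS n k x : ℝ) : ℂ) := by
    rw [Polynomial.leadingCoeff, hdeg, hDk]
  have hPR : ∀ j, j ≤ k → PR (D.coeff j) := by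
    intro j hj
    rw [hfac, coeff_C_mul]
    apply PR.mul
    · rw [hlc, PR_real]
      exact HX k le_rfl
    · have hrw : (D.roots.map fun a => X - C a)
          = (D.roots.map fun a => -a).map fun a => X + C a := by
        rw [Multiset.map_map]
        apply Multiset.map_congr rfl
        intro z _
        simp [sub_eq_add_neg]
      rw [hrw, Multiset.prod_X_add_C_coeff]
      · apply PR_esymm
        · rw [Multiset.card_map, hcard]
          omega
        · intro a ha
          obtain ⟨z, hz, rfl⟩ := Multiset.mem_map.mp ha
          exact ⟨by simp [hreal z hz], by simpa using hneg z hz⟩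
      · rw [Multiset.card_map, hcard]
        omega
  intro j hj
  have h1 := hPR j hj
  have h2 : D.coeff j = (((dirP n k w x).coeff j : ℝ) : ℂ) := by
    rw [hmap, coeff_map]
    simp
  rw [h2, PR_real] at h1
  exact h1

/-- membership in the "ray cone" : `eS k (w + t𝟙) > 0` for all `t ≥ 0`. -/
def GE (n k : ℕ) (w : Fin n → ℝ) : Prop := ∀ t : ℝ, 0 ≤ t → 0 < eS n k (fun i => w i + t)

lemma GE_of_pos {k : ℕ} (hkn : k ≤ n) {w : Fin n → ℝ}
    (HW : ∀ j, j ≤ k → 0 < eS n j w) : GE n k w := by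
  intro t ht
  rw [eS_shift' hkn]
  apply eval_pos_of_coeff_nonneg _ _ _ ht
  · rw [qp_coeff hkn w (Nat.zero_le k), Nat.sub_zero]
    have h1 : (0:ℝ) < ((0 + (n - k)).choose (n - k) : ℝ) := by
      exact_mod_cast Nat.choose_pos (by omega)
    exact mul_pos h1 (HW k le_rfl)
  · intro i
    rcases le_or_gt i k with hik | hik
    · rw [qp_coeff hkn w hik]
      have h1 : (0:ℝ) ≤ ((i + (n - k)).choose (n - k) : ℝ) := by positivity
      exact mul_nonneg h1 (HW (k - i) (by omega)).le
    · rw [qp_coeff_zero_of_gt hkn w hik]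

lemma GE_segment {k : ℕ} (hkn : k ≤ n) {w : Fin n → ℝ} (hw : GE n k w) {r : ℝ}
    (hr0 : 0 ≤ r) (hr1 : r ≤ 1) : GE n k (fun i => (1 - r) * w i + r) := by
  intro t ht
  rcases eq_or_lt_of_le hr1 with rfl | hlt
  · have hfun : (fun i => ((1 - 1) * w i + 1) + t) = fun _ : Fin n => (1 + t) := by
      funext i
      ring
    rw [hfun, eS_const]
    have h1 : (0:ℝ) < (n.choose k : ℝ) := by exact_mod_cast Nat.choose_pos hkn
    have h2 : (0:ℝ) < (1 + t) ^ k := by positivity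
    exact mul_pos h1 h2
  · have h1r : 0 < 1 - r := by linarith
    have hfun : (fun i => ((1 - r) * w i + r) + t)
        = fun i => (1 - r) * (w i + (r + t) / (1 - r)) := by
      funext i
      field_simp
      ring
    rw [hfun, eS_smul]
    have harg : 0 ≤ (r + t) / (1 - r) := by positivity
    exact mul_pos (pow_pos h1r k) (hw _ harg)

lemma dirP_self_coeff {k : ℕ} (hkn : k ≤ n) {x : Fin n → ℝ} (hx : 0 < eS n k x) :
    ∀ j, j ≤ k → 0 < (dirP n k x x).coeff j := by
  have hpoly : dirP n k x x = eS n k x • ((X + 1) ^ k : ℝ[X]) := by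
    apply Polynomial.funext
    intro t
    rw [dirP_eval]
    have hfun : (fun i => x i + x i * t) = fun i => (1 + t) * x i := by
      funext i
      ring
    rw [hfun, eS_smul]
    rw [smul_eq_C_mul, eval_mul, eval_C, eval_pow, eval_add, eval_X, eval_one]
    ring
  intro j hj
  rw [hpoly, coeff_smul, coeff_X_add_one_pow, smul_eq_mul]
  have h1 : (0:ℝ) < (k.choose j : ℝ) := by exact_mod_cast Nat.choose_pos hj
  exact mul_pos hx h1

/-- propagation of coefficient positivity along a segment inside the ray cone -/
lemma seg_run {k : ℕ} (hk1 : 1 ≤ k) (hkn : k ≤ n) {x : Fin n → ℝ}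
    (HX : ∀ j, j ≤ k → 0 < eS n j x) (W : ℝ → Fin n → ℝ)
    (hWcont : ∀ i, Continuous fun r => W r i)
    (hGE : ∀ r ∈ Set.Icc (0:ℝ) 1, GE n k (W r))
    (hstart : ∃ r ∈ Set.Icc (0:ℝ) 1, ∀ j, j ≤ k → 0 < (dirP n k (W r) x).coeff j) :
    ∀ r ∈ Set.Icc (0:ℝ) 1, ∀ j, j ≤ k → 0 < (dirP n k (W r) x).coeff j := by
  have hcont : ∀ j : ℕ, Continuous fun r => (dirP n k (W r) x).coeff j := fun j =>
    (dirP_coeff_continuous k j x).comp (continuous_pi hWcont)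
  refine clopen_Icc (P := fun r => ∀ j, j ≤ k → 0 < (dirP n k (W r) x).coeff j)
    hstart ?_ ?_
  · intro c _ hPc
    have hev : ∀ j ∈ Finset.range (k + 1), ∀ᶠ r in 𝓝 c, 0 < (dirP n k (W r) x).coeff j := by
      intro j hj
      exact ((hcont j).tendsto c).eventually
        (eventually_gt_nhds (hPc j (by have := Finset.mem_range.mp hj; omega)))
    have hall := (Filter.eventually_all_finset (Finset.range (k + 1))).mpr hev
    filter_upwards [hall] with r hr j hj
    exact hr j (Finset.mem_range.mpr (by omega))
  · intro c hc hnb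
    haveI := hnb
    have hnn : ∀ j, j ≤ k → 0 ≤ (dirP n k (W c) x).coeff j := by
      intro j hj
      apply ge_of_tendsto (((hcont j).tendsto c).mono_left
        (nhdsWithin_le_nhds : 𝓝[{xx | xx ∈ Set.Icc (0:ℝ) 1 ∧
          ∀ j, j ≤ k → 0 < (dirP n k (W xx) x).coeff j} \ {c}] c ≤ 𝓝 c))
      filter_upwards [eventually_mem_nhdsWithin] with r hr
      exact (hr.1.2 j hj).le
    have hw : 0 < eS n k (W c) := by
      have := hGE c hc 0 le_rfl
      have hfun : (fun i => W c i + 0) = W c := by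
        funext i
        ring
      rwa [hfun] at this
    exact dirP_coeff_pos_of_nonneg hk1 hkn HX hw hnn

/-- the convexity kernel : coefficients of `dirP y x` are positive -/
lemma key_pos {k : ℕ} (hk1 : 1 ≤ k) (hkn : k ≤ n) {x y : Fin n → ℝ}
    (HX : ∀ j, j ≤ k → 0 < eS n j x) (HY : ∀ j, j ≤ k → 0 < eS n j y) :
    ∀ j, j ≤ k → 0 < (dirP n k y x).coeff j := by
  have hGEx : GE n k x := GE_of_pos hkn HX
  have hGEy : GE n k y := GE_of_pos hkn HY
  -- segment 1 : from x (r = 0) to 𝟙 (r = 1)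
  have hseg1 : ∀ r ∈ Set.Icc (0:ℝ) 1, ∀ j, j ≤ k →
      0 < (dirP n k (fun i => (1 - r) * x i + r) x).coeff j := by
    apply seg_run hk1 hkn HX _ (fun i => by fun_prop)
    · intro r hr
      exact GE_segment hkn hGEx hr.1 hr.2
    · refine ⟨0, ⟨le_rfl, zero_le_one⟩, ?_⟩
      have hfun : (fun i => (1 - (0:ℝ)) * x i + 0) = x := by
        funext i
        ring
      rw [hfun]
      exact dirP_self_coeff hkn (HX k le_rfl)
  -- segment 2 : from y (r = 0) to 𝟙 (r = 1)
  have hseg2 : ∀ r ∈ Set.Icc (0:ℝ) 1, ∀ j, j ≤ k →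
      0 < (dirP n k (fun i => (1 - r) * y i + r) x).coeff j := by
    apply seg_run hk1 hkn HX _ (fun i => by fun_prop)
    · intro r hr
      exact GE_segment hkn hGEy hr.1 hr.2
    · refine ⟨1, ⟨zero_le_one, le_rfl⟩, ?_⟩
      have hfun : (fun i => (1 - (1:ℝ)) * y i + 1) = fun i => (1 - (1:ℝ)) * x i + 1 := by
        funext i
        ring
      rw [hfun]
      exact hseg1 1 ⟨zero_le_one, le_rfl⟩
  intro j hj
  have := hseg2 0 ⟨le_rfl, zero_le_one⟩ j hj
  have hfun : (fun i => (1 - (0:ℝ)) * y i + 0) = y := by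
    funext i
    ring
  rwa [hfun] at this

lemma key_eval {k : ℕ} (hk1 : 1 ≤ k) (hkn : k ≤ n) {x y : Fin n → ℝ}
    (HX : ∀ j, j ≤ k → 0 < eS n j x) (HY : ∀ j, j ≤ k → 0 < eS n j y)
    {s : ℝ} (hs : 0 ≤ s) : 0 < eS n k (fun i => y i + x i * s) := by
  rw [← dirP_eval]
  apply eval_pos_of_coeff_nonneg _ _ _ hs
  · rw [dirP_coeff_zero]
    exact HY k le_rfl
  · intro i
    rcases le_or_gt i k with hik | hik
    · exact (key_pos hk1 hkn HX HY i hik).le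
    · rw [dirP_coeff_eq_zero_of_gt hik]

end Gd

open Gd in
/-- For `n ≥ 1` and `1 ≤ k ≤ n`, the Garding cone `Γ_k` is an open
convex cone: it is open, convex, closed under multiplication by positive scalars,
invariant under permutations of the coordinates, and contains the positive cone. -/
theorem stmt_7 (n k : ℕ) (hn : 1 ≤ n) (hk1 : 1 ≤ k) (hkn : k ≤ n) :
    IsOpen (GardingCone n k) ∧
    Convex ℝ (GardingCone n k) ∧
    (∀ κ ∈ GardingCone n k, ∀ c : ℝ, 0 < c → c • κ ∈ GardingCone n k) ∧
    (∀ σ : Equiv.Perm (Fin n), ∀ κ ∈ GardingCone n k, κ ∘ σ ∈ GardingCone n k) ∧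
    (∀ κ : Fin n → ℝ, (∀ i, 0 < κ i) → κ ∈ GardingCone n k) := by
  have hHsym : ∀ (j : ℕ) (κ : Fin n → ℝ), Hsym n j κ = ((n.choose j : ℝ))⁻¹ * eS n j κ :=
    fun j κ => rfl
  have hbridge : ∀ (j : ℕ), 1 ≤ j → j ≤ k → ∀ κ : Fin n → ℝ,
      (0 < Hsym n j κ ↔ 0 < eS n j κ) := by
    intro j hj1 hjk κ
    have hc : (0:ℝ) < ((n.choose j : ℝ))⁻¹ := by
      have h1 : 0 < n.choose j := Nat.choose_pos (le_trans hjk hkn)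
      have h2 : (0:ℝ) < (n.choose j : ℝ) := by exact_mod_cast h1
      exact inv_pos.mpr h2
    rw [hHsym]
    constructor
    · intro h
      by_contra h'
      push_neg at h'
      have h2 := mul_le_mul_of_nonneg_left h' hc.le
      rw [mul_zero] at h2
      linarith
    · intro h
      exact mul_pos hc h
  have hmem : ∀ κ : Fin n → ℝ,
      (κ ∈ GardingCone n k ↔ ∀ j, 1 ≤ j → j ≤ k → 0 < eS n j κ) := by
    intro κ
    constructor <;> intro h j hj1 hjk
    · exact (hbridge j hj1 hjk κ).mp (h j hj1 hjk)
    · exact (hbridge j hj1 hjk κ).mpr (h j hj1 hjk)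
  have hfull : ∀ κ : Fin n → ℝ, κ ∈ GardingCone n k → ∀ j : ℕ, j ≤ k → 0 < eS n j κ := by
    intro κ hκ j hjk
    rcases Nat.eq_zero_or_pos j with rfl | hj
    · rw [eS_zero]
      exact one_pos
    · exact (hmem κ).mp hκ j hj hjk
  refine ⟨?_, ?_, ?_, ?_, ?_⟩
  · -- openness
    have hcont : ∀ j : ℕ, Continuous (Hsym n j) := by
      intro j
      have hrw : Hsym n j = fun κ : Fin n → ℝ => ((n.choose j : ℝ))⁻¹ *
          ∑ s ∈ Finset.powersetCard j (Finset.univ : Finset (Fin n)), ∏ i ∈ s, κ i := rfl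
      rw [hrw]
      exact continuous_const.mul (continuous_finset_sum _ fun s _ =>
        continuous_finset_prod _ fun i _ => continuous_apply i)
    have hset : GardingCone n k
        = ⋂ j ∈ Finset.Icc 1 k, {κ : Fin n → ℝ | 0 < Hsym n j κ} := by
      ext κ
      simp only [GardingCone, Set.mem_setOf_eq, Set.mem_iInter, Finset.mem_Icc]
      constructor
      · intro h j hj
        exact h j hj.1 hj.2
      · intro h j hj1 hjk
        exact h j ⟨hj1, hjk⟩
    rw [hset]
    exact isOpen_biInter_finset fun j _ => isOpen_lt continuous_const (hcont j)
  · -- convexity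
    intro κ hκ μ hμ a b ha hb hab
    rw [hmem]
    intro j hj1 hjk
    have hjn : j ≤ n := le_trans hjk hkn
    have HK : ∀ i, i ≤ j → 0 < eS n i κ := fun i hi => hfull κ hκ i (le_trans hi hjk)
    have HM : ∀ i, i ≤ j → 0 < eS n i μ := fun i hi => hfull μ hμ i (le_trans hi hjk)
    rcases eq_or_lt_of_le hb with hb0 | hbpos
    · have ha1 : a = 1 := by linarith
      have hvk : a • κ + b • μ = κ := by
        funext i
        simp [← hb0, ha1]
      rw [hvk]
      exact HK j le_rfl
    · have hb0 : b ≠ 0 := hbpos.ne'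
      have hvec : a • κ + b • μ = fun i => b * (μ i + κ i * (a / b)) := by
        funext i
        simp only [Pi.add_apply, Pi.smul_apply, smul_eq_mul]
        field_simp
        ring
      rw [hvec, eS_smul]
      have hs : (0:ℝ) ≤ a / b := by positivity
      exact mul_pos (pow_pos hbpos j) (key_eval hj1 hjn HK HM hs)
  · -- positive scaling
    intro κ hκ c hc
    rw [hmem]
    intro j hj1 hjk
    have hvec : c • κ = fun i => c * κ i := rfl
    rw [hvec, eS_smul]
    exact mul_pos (pow_pos hc j) ((hmem κ).mp hκ j hj1 hjk)
  · -- permutation invariance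
    intro σ κ hκ
    rw [hmem]
    intro j hj1 hjk
    rw [eS_perm]
    exact (hmem κ).mp hκ j hj1 hjk
  · -- positive cone
    intro κ hκ
    rw [hmem]
    intro j hj1 hjk
    exact eS_pos (le_trans hjk hkn) hκ
end

section
/- For n ≥ 1 and 1 ≤ k ≤ n, the curvature quotient F(κ) = H_k(κ)/H_{k−1}(κ) is concave on the Garding cone Γ_k: for all κ, λ ∈ Γ_k and all t ∈ [0, 1], F(tκ + (1 − t)λ) ≥ t·F(κ) + (1 − t)·F(λ). Moreover F is positively homogeneous of degree 1 on Γ_k with F(1, …, 1) = 1. -/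
set_option linter.unusedSectionVars false
set_option linter.unusedVariables false
set_option maxHeartbeats 1000000

namespace Stmt9
open Multiset Polynomial Finset


lemma mesymm_zero (s : Multiset ℝ) : s.esymm 0 = 1 := by
  simp [Multiset.esymm]

lemma mesymm_cons (a : ℝ) (s : Multiset ℝ) (k : ℕ) :
    (a ::ₘ s).esymm (k+1) = s.esymm (k+1) + a * s.esymm k := by
  rw [Multiset.esymm, Multiset.powersetCard_cons, Multiset.map_add, Multiset.sum_add,
    Multiset.map_map]
  rw [Multiset.esymm, Multiset.esymm]
  congr 1
  rw [← Multiset.sum_map_mul_left]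
  congr 1
  apply Multiset.map_congr rfl
  intro t _
  simp [Multiset.prod_cons]

lemma mesymm_eq_zero (s : Multiset ℝ) (k : ℕ) (h : Multiset.card s < k) : s.esymm k = 0 := by
  rw [Multiset.esymm, Multiset.powersetCard_eq_empty _ h]
  simp

lemma mesymm_card (s : Multiset ℝ) : s.esymm (Multiset.card s) = s.prod := by
  induction s using Multiset.induction with
  | empty => simp [Multiset.esymm]
  | cons a s ih =>
      rw [Multiset.card_cons, mesymm_cons, ih, mesymm_eq_zero s _ (Nat.lt_succ_self _),
        Multiset.prod_cons]
      ring

lemma mesymm_one (s : Multiset ℝ) : s.esymm 1 = s.sum := by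
  induction s using Multiset.induction with
  | empty => simp [mesymm_eq_zero 0 1 (by simp)]
  | cons a s ih => rw [Multiset.sum_cons, mesymm_cons, ih, mesymm_zero]; ring

lemma mesymm_smul (t : ℝ) (s : Multiset ℝ) (k : ℕ) :
    (s.map (fun x => t * x)).esymm k = t ^ k * s.esymm k := by
  rw [Multiset.esymm, Multiset.esymm, Multiset.powersetCard_map, Multiset.map_map,
    ← Multiset.sum_map_mul_left]
  congr 1
  apply Multiset.map_congr rfl
  intro u hu
  have hc : Multiset.card u = k := (Multiset.mem_powersetCard.mp hu).2
  simp only [Function.comp_apply]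
  rw [Multiset.prod_map_mul]
  congr 1
  · rw [Multiset.map_const', Multiset.prod_replicate, hc]
  · rw [Multiset.map_id']

/-- sum over elements of products over the rest -/
lemma ML1 (s : Multiset ℝ) (hs : s ≠ 0) :
    s.esymm (Multiset.card s - 1) = (s.map fun a => (s.erase a).prod).sum := by
  induction s using Multiset.induction with
  | empty => exact absurd rfl hs
  | cons a u ih =>
      rcases eq_or_ne u 0 with rfl | hu
      · simp [mesymm_zero]
      · have hcu : Multiset.card u = (Multiset.card u - 1) + 1 :=
          (Nat.succ_pred_eq_of_pos (Multiset.card_pos.mpr hu)).symm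
        have hmap : ∀ x ∈ u, ((a ::ₘ u).erase x).prod = a * (u.erase x).prod := by
          intro x hx
          rcases eq_or_ne x a with rfl | hxa
          · rw [Multiset.erase_cons_head, ← Multiset.prod_cons, Multiset.cons_erase hx]
          · rw [Multiset.erase_cons_tail_of_mem hx, Multiset.prod_cons]
        calc (a ::ₘ u).esymm (Multiset.card (a ::ₘ u) - 1)
            = (a ::ₘ u).esymm ((Multiset.card u - 1) + 1) := by
              have h9 : Multiset.card (a ::ₘ u) - 1 = (Multiset.card u - 1) + 1 := by
                rw [Multiset.card_cons]; omega
              rw [h9]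
          _ = u.esymm ((Multiset.card u - 1) + 1) + a * u.esymm (Multiset.card u - 1) := by
              rw [mesymm_cons]
          _ = u.prod + a * (u.map fun x => (u.erase x).prod).sum := by
              rw [ih hu, ← hcu, mesymm_card]
          _ = ((a ::ₘ u).map fun x => ((a ::ₘ u).erase x).prod).sum := by
              rw [Multiset.map_cons, Multiset.sum_cons, Multiset.erase_cons_head]
              congr 1
              rw [Multiset.map_congr rfl hmap, ← Multiset.sum_map_mul_left]


lemma pairSq (P : Multiset ℝ) :
    P.sum ^ 2 = (P.map (fun x => x ^ 2)).sum + 2 * P.esymm 2 := by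
  induction P using Multiset.induction with
  | empty => simp [mesymm_eq_zero 0 2 (by simp)]
  | cons a Q ih =>
      rw [Multiset.sum_cons, Multiset.map_cons, Multiset.sum_cons, mesymm_cons, mesymm_one]
      nlinarith [ih]

lemma cauchyM (P : Multiset ℝ) :
    P.sum ^ 2 ≤ (Multiset.card P : ℝ) * (P.map (fun x => x ^ 2)).sum := by
  induction P using Multiset.induction with
  | empty => simp
  | cons a Q ih =>
      rw [Multiset.sum_cons, Multiset.map_cons, Multiset.sum_cons, Multiset.card_cons]
      have hc : (0:ℝ) ≤ (Multiset.card Q : ℝ) := by positivity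
      have hQ : (0:ℝ) ≤ (Q.map (fun x => x ^ 2)).sum := by
        apply Multiset.sum_nonneg; intro z hz
        obtain ⟨w, _, rfl⟩ := Multiset.mem_map.mp hz
        positivity
      push_cast
      rcases eq_or_ne Q 0 with rfl | hQ0
      · simp
      · have hc0 : (0:ℝ) < (Multiset.card Q : ℝ) := by
          have := Multiset.card_pos.mpr hQ0; exact_mod_cast this
        have key : (Multiset.card Q : ℝ) * ((a + Q.sum) ^ 2)
            ≤ (Multiset.card Q : ℝ) * (((Multiset.card Q : ℝ) + 1) *
              (a ^ 2 + (Multiset.map (fun x => x ^ 2) Q).sum)) := by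
          nlinarith [ih, sq_nonneg ((Multiset.card Q : ℝ) * a - Q.sum),
            mul_le_mul_of_nonneg_left ih hc0.le]
        exact le_of_mul_le_mul_left key hc0

lemma ML2 (s : Multiset ℝ) (hs : 2 ≤ Multiset.card s) :
    s.esymm (Multiset.card s - 2) * s.prod = (s.map fun a => (s.erase a).prod).esymm 2 := by
  induction s using Multiset.induction with
  | empty => simp at hs
  | cons a u ih =>
      have hu1 : 1 ≤ Multiset.card u := by
        have := Multiset.card_cons a u; omega
      have hmap : ∀ x ∈ u, ((a ::ₘ u).erase x).prod = a * (u.erase x).prod := by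
        intro x hx
        rcases eq_or_ne x a with rfl | hxa
        · rw [Multiset.erase_cons_head, ← Multiset.prod_cons, Multiset.cons_erase hx]
        · rw [Multiset.erase_cons_tail_of_mem hx, Multiset.prod_cons]
      have hmapeq : ((a ::ₘ u).map fun x => ((a ::ₘ u).erase x).prod)
          = u.prod ::ₘ ((u.map fun x => (u.erase x).prod).map (fun y => a * y)) := by
        rw [Multiset.map_cons, Multiset.erase_cons_head, Multiset.map_congr rfl hmap,
          Multiset.map_map]
        rfl
      rcases eq_or_lt_of_le hu1 with h1 | h2
      · -- card u = 1 : s = {a, b}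
        obtain ⟨b, rfl⟩ := Multiset.card_eq_one.mp h1.symm
        rw [hmapeq]
        simp only [Multiset.map_singleton, Multiset.erase_singleton, Multiset.prod_zero,
          Multiset.prod_singleton]
        rw [show Multiset.card (a ::ₘ {b}) - 2 = 0 by simp, mesymm_zero]
        rw [show (2:ℕ) = 1 + 1 by rfl, mesymm_cons, mesymm_one,
          mesymm_eq_zero _ (1+1) (by simp)]
        simp [Multiset.prod_cons]
        ring
      · -- card u ≥ 2
        have hu0 : u ≠ 0 := by
          intro h; rw [h] at h2; simp at h2
        have hcu : Multiset.card (a ::ₘ u) - 2 = (Multiset.card u - 2) + 1 := by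
          rw [Multiset.card_cons]; omega
        have hsum : (Multiset.map (fun y => a * y)
            (Multiset.map (fun x => (u.erase x).prod) u)).sum
            = a * (Multiset.map (fun x => (u.erase x).prod) u).sum := by
          rw [Multiset.sum_map_mul_left, Multiset.map_id']
        rw [hcu, mesymm_cons, Multiset.prod_cons, hmapeq, mesymm_cons, mesymm_one,
          mesymm_smul, hsum]
        rw [show ((Multiset.map (fun x => (u.erase x).prod) u).esymm (1+1))
            = (Multiset.map (fun x => (u.erase x).prod) u).esymm 2 from rfl]
        rw [← ih (by omega), ← ML1 u hu0]
        have : Multiset.card u - 2 + 1 = Multiset.card u - 1 := by omega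
        rw [this]
        ring


lemma splits_derivative (p : ℝ[X]) (hp : p.Splits) :
    (derivative p).Splits := by
  rcases le_or_gt p.natDegree 1 with h | h
  · exact Splits.of_natDegree_le_one (le_trans (natDegree_derivative_le p) (by omega))
  · have hcard : Multiset.card p.roots = p.natDegree := (splits_iff_card_roots).mp hp
    have h2 := p.card_roots_le_derivative
    have h3 : Multiset.card (derivative p).roots ≤ natDegree (derivative p) :=
      card_roots' _
    have h4 : natDegree (derivative p) ≤ p.natDegree - 1 := natDegree_derivative_le p
    exact (splits_iff_card_roots).mpr (by omega)

lemma splits_mprod (s : Multiset ℝ) :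
    ((s.map fun a => X + C a).prod).Splits := by
  induction s using Multiset.induction with
  | empty => simpa using (Splits.one (R := ℝ))
  | cons a u ih =>
      rw [Multiset.map_cons, Multiset.prod_cons]
      exact Splits.mul (Splits.of_natDegree_le_one (by simp [natDegree_X_add_C])) ih

/-- derivative step: given a multiset of `m ≥ 1` reals, there is a multiset of `m-1` reals
with proportionally related elementary symmetric functions. -/
lemma der (s : Multiset ℝ) (hs : 1 ≤ Multiset.card s) :
    ∃ t : Multiset ℝ, Multiset.card t = Multiset.card s - 1 ∧
      ∀ j, j ≤ Multiset.card s - 1 →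
        (Multiset.card s : ℝ) * t.esymm j = ((Multiset.card s - j : ℕ) : ℝ) * s.esymm j := by
  classical
  set m := Multiset.card s with hm
  set f : ℝ[X] := (s.map fun a => X + C a).prod with hf
  have hallmon : ∀ q ∈ (s.map fun a => X + C a), q.Monic := by
    intro q hq
    obtain ⟨a, _, rfl⟩ := Multiset.mem_map.mp hq
    exact monic_X_add_C a
  have hmon : f.Monic := monic_multiset_prod_of_monic _ _ (fun a _ => monic_X_add_C a)
  have hdeg : f.natDegree = m := by
    rw [hf, natDegree_multiset_prod_of_monic _ hallmon]
    rw [Multiset.map_map]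
    have : (Multiset.map (fun a => natDegree (X + C a)) s) = Multiset.map (fun _ => 1) s := by
      apply Multiset.map_congr rfl
      intro a _
      simp [natDegree_X_add_C]
    rw [show Multiset.map (natDegree ∘ fun a => X + C a) s
        = Multiset.map (fun a => natDegree (X + C a)) s from rfl, this]
    simp [hm]
  set g : ℝ[X] := derivative f with hg
  have hgsplit : g.Splits := splits_derivative f (splits_mprod s)
  have hgdeg : g.natDegree = m - 1 := by
    have hd := degree_derivative_eq f (by omega)
    have hdg : g.degree = ((m - 1 : ℕ) : WithBot ℕ) := by rw [hg, hd, hdeg]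
    exact natDegree_eq_of_degree_eq_some hdg
  have hgcard : Multiset.card g.roots = m - 1 := by
    rw [(splits_iff_card_roots).mp hgsplit, hgdeg]
  refine ⟨g.roots.map (fun r => -r), by simpa using hgcard, ?_⟩
  intro j hj
  have hcfm : f.coeff (m - 1 + 1) = 1 := by
    rw [show m - 1 + 1 = m by omega, ← hdeg]
    exact hmon.coeff_natDegree
  have hlead : g.leadingCoeff = (m : ℝ) := by
    rw [Polynomial.leadingCoeff, hgdeg, hg, coeff_derivative, hcfm, one_mul,
      show ((m - 1 : ℕ) : ℝ) + 1 = ((m - 1 + 1 : ℕ) : ℝ) by push_cast; ring,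
      show m - 1 + 1 = m by omega]
  have hprodform := hgsplit.eq_prod_roots
  have hre : (g.roots.map fun a => X - C a)
      = ((g.roots.map (fun r => -r)).map fun a => X + C a) := by
    rw [Multiset.map_map]
    apply Multiset.map_congr rfl
    intro r _
    simp [sub_eq_add_neg]
  set t : Multiset ℝ := g.roots.map (fun r => -r) with ht
  have htc : Multiset.card t = m - 1 := by rw [ht, Multiset.card_map, hgcard]
  set i := m - 1 - j with hi
  have hii : i ≤ m - 1 := by omega
  have c2 : g.coeff i = (m:ℝ) * t.esymm j := by
    rw [hprodform, hlead, hre, coeff_C_mul,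
      Multiset.prod_X_add_C_coeff t (by omega : i ≤ Multiset.card t)]
    rw [htc, show m - 1 - i = j by omega]
  have c1 : g.coeff i = ((m - j : ℕ) : ℝ) * s.esymm j := by
    rw [hg, coeff_derivative, Multiset.prod_X_add_C_coeff s (by omega : i + 1 ≤ Multiset.card s)]
    rw [← hm, show m - (i+1) = j by omega, mul_comm]
    congr 1
    rw [show ((i : ℕ) : ℝ) + 1 = ((i + 1 : ℕ) : ℝ) by push_cast; ring,
      show i + 1 = m - j by omega]
  rw [← c2, c1]


lemma chooseId (m i : ℕ) (h : i + 1 ≤ m) :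
    (m - i) * m.choose i = m * (m-1).choose i := by
  have h1 : m.choose i * i.factorial * (m - i).factorial = m.factorial :=
    Nat.choose_mul_factorial_mul_factorial (by omega)
  have h2 : (m-1).choose i * i.factorial * (m - 1 - i).factorial = (m-1).factorial :=
    Nat.choose_mul_factorial_mul_factorial (by omega)
  have h3 : (m - i).factorial = (m - i) * (m - 1 - i).factorial := by
    rw [show m - i = (m - 1 - i) + 1 by omega, Nat.factorial_succ]
  have h4 : m * (m-1).factorial = m.factorial := Nat.mul_factorial_pred (by omega)
  have key : ((m - i) * m.choose i) * (i.factorial * (m - 1 - i).factorial)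
      = (m * (m-1).choose i) * (i.factorial * (m - 1 - i).factorial) := by
    calc ((m - i) * m.choose i) * (i.factorial * (m - 1 - i).factorial)
        = m.choose i * i.factorial * ((m - i) * (m - 1 - i).factorial) := by ring
      _ = m.choose i * i.factorial * (m - i).factorial := by rw [← h3]
      _ = m.factorial := h1
      _ = m * (m-1).factorial := h4.symm
      _ = m * ((m-1).choose i * i.factorial * (m - 1 - i).factorial) := by rw [h2]
      _ = (m * (m-1).choose i) * (i.factorial * (m - 1 - i).factorial) := by ring
  exact Nat.eq_of_mul_eq_mul_right (by positivity) key

lemma chooseLC (m j : ℕ) (h : j + 2 ≤ m) :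
    m.choose j * m.choose (j+2) ≤ m.choose (j+1) * m.choose (j+1) := by
  have h1 : m.choose (j+1) * (j+1) = m.choose j * (m - j) := Nat.choose_succ_right_eq m j
  have h2 : m.choose (j+2) * (j+2) = m.choose (j+1) * (m - (j+1)) :=
    Nat.choose_succ_right_eq m (j+1)
  have key : (m.choose j * m.choose (j+2)) * ((m - j) * (j+2))
      = (m.choose (j+1) * m.choose (j+1)) * ((j+1) * (m - (j+1))) := by
    calc (m.choose j * m.choose (j+2)) * ((m - j) * (j+2))
        = (m.choose j * (m - j)) * (m.choose (j+2) * (j+2)) := by ring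
      _ = (m.choose (j+1) * (j+1)) * (m.choose (j+1) * (m - (j+1))) := by rw [h1, h2]
      _ = (m.choose (j+1) * m.choose (j+1)) * ((j+1) * (m - (j+1))) := by ring
  have hle : (j+1) * (m - (j+1)) ≤ (m - j) * (j+2) := by
    have := Nat.mul_le_mul (show j+1 ≤ j+2 by omega) (show m - (j+1) ≤ m - j by omega)
    calc (j+1) * (m - (j+1)) ≤ (j+2) * (m - j) := this
      _ = (m - j) * (j+2) := by ring
  have : (m.choose j * m.choose (j+2)) * ((m - j) * (j+2))
      ≤ (m.choose (j+1) * m.choose (j+1)) * ((m - j) * (j+2)) := by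
    rw [key]
    exact Nat.mul_le_mul_left _ hle
  exact Nat.le_of_mul_le_mul_right this (Nat.mul_pos (by omega) (by omega))

theorem newtonM (d : ℕ) : ∀ (j : ℕ) (s : Multiset ℝ), Multiset.card s = j + 2 + d →
    ((j + 2 + d).choose (j+1) : ℝ)^2 * (s.esymm j * s.esymm (j+2))
      ≤ ((j + 2 + d).choose j : ℝ) * ((j + 2 + d).choose (j+2) : ℝ) * s.esymm (j+1)^2 := by
  induction d with
  | zero =>
      intro j s hcard
      have hs0 : s ≠ 0 := by
        intro h; rw [h] at hcard; simp at hcard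
      set P : Multiset ℝ := s.map (fun a => (s.erase a).prod) with hP
      have hPsum : s.esymm (j+1) = P.sum := by
        have := ML1 s hs0
        rwa [hcard, show j + 2 + 0 - 1 = j + 1 by omega] at this
      have hP2 : s.esymm j * s.prod = P.esymm 2 := by
        have := ML2 s (by omega)
        rwa [hcard, show j + 2 + 0 - 2 = j by omega] at this
      have hprod : s.esymm (j+2) = s.prod := by
        rw [← mesymm_card s, hcard]
      have hcardP : (Multiset.card P : ℝ) = ((j:ℝ) + 2) := by
        rw [hP, Multiset.card_map, hcard]; push_cast; ring
      have cauchy := cauchyM P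
      have pairs := pairSq P
      have h2c : ((j+2).choose 2) * 2 = (j+2) * (j+1) := by
        rw [Nat.choose_two_right, show j + 2 - 1 = j + 1 by omega]
        apply Nat.div_mul_cancel
        have : Even ((j+1) * (j+2)) := Nat.even_mul_succ_self (j+1)
        rw [mul_comm] at this
        exact this.two_dvd
      have h2cR : ((j+2).choose 2 : ℝ) * 2 = ((j:ℝ)+2) * ((j:ℝ)+1) := by
        exact_mod_cast h2c
      have hc1 : (j + 2 + 0).choose (j+1) = j + 2 := by
        have h0 := Nat.choose_symm (show 1 ≤ j + 2 by omega)
        rw [show j + 2 - 1 = j + 1 by omega, Nat.choose_one_right] at h0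
        rw [Nat.add_zero, h0]
      have hc2 : (j + 2 + 0).choose j = (j+2).choose 2 := by
        have h0 := Nat.choose_symm (show 2 ≤ j + 2 by omega)
        rw [show j + 2 - 2 = j by omega] at h0
        rw [Nat.add_zero, h0]
      have hc3 : (j + 2 + 0).choose (j+2) = 1 := by
        rw [Nat.add_zero, Nat.choose_self]
      rw [hc1, hc2, hc3, hPsum, hprod, hP2]
      rw [hcardP] at cauchy
      have key := mul_nonneg (show (0:ℝ) ≤ (j:ℝ)+2 by positivity) (sub_nonneg.mpr cauchy)
      have pairsS : ((j:ℝ)+2)^2 * P.sum^2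
          = ((j:ℝ)+2)^2 * ((Multiset.map (fun x => x^2) P).sum + 2*P.esymm 2) := by
        rw [← pairs]
      have h2cS : ((j+2).choose 2 : ℝ) * 2 * P.sum^2 = (((j:ℝ)+2)*((j:ℝ)+1)) * P.sum^2 := by
        rw [h2cR]
      push_cast
      nlinarith [key, pairsS, h2cS]
  | succ d ih =>
      intro j s hcard
      have hm : Multiset.card s = j + 3 + d := by omega
      obtain ⟨t, htc, hrel⟩ := der s (by omega)
      have htcard : Multiset.card t = j + 2 + d := by omega
      have IH := ih j t htcard
      rw [show j + 2 + (d+1) = j + 3 + d by omega]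
      set m : ℕ := j + 3 + d with hmdef
      have e1 : (m:ℝ) * t.esymm j = ((m - j : ℕ):ℝ) * s.esymm j := by
        have := hrel j (by omega); rwa [hm] at this
      have e2 : (m:ℝ) * t.esymm (j+1) = ((m - (j+1) : ℕ):ℝ) * s.esymm (j+1) := by
        have := hrel (j+1) (by omega); rwa [hm] at this
      have e3 : (m:ℝ) * t.esymm (j+2) = ((m - (j+2) : ℕ):ℝ) * s.esymm (j+2) := by
        have := hrel (j+2) (by omega); rwa [hm] at this
      have q1 : ((m - j : ℕ):ℝ) * (m.choose j : ℝ) = (m:ℝ) * ((j+2+d).choose j : ℝ) := by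
        have h0 := chooseId m j (by omega)
        rw [show (m:ℕ) - 1 = j + 2 + d by omega] at h0
        exact_mod_cast h0
      have q2 : ((m - (j+1) : ℕ):ℝ) * (m.choose (j+1) : ℝ)
          = (m:ℝ) * ((j+2+d).choose (j+1) : ℝ) := by
        have h0 := chooseId m (j+1) (by omega)
        rw [show (m:ℕ) - 1 = j + 2 + d by omega] at h0
        exact_mod_cast h0
      have q3 : ((m - (j+2) : ℕ):ℝ) * (m.choose (j+2) : ℝ)
          = (m:ℝ) * ((j+2+d).choose (j+2) : ℝ) := by
        have h0 := chooseId m (j+2) (by omega)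
        rw [show (m:ℕ) - 1 = j + 2 + d by omega] at h0
        exact_mod_cast h0
      have hu : (0:ℝ) < ((m - j : ℕ):ℝ) := by
        have : 0 < m - j := by omega
        exact_mod_cast this
      have hv : (0:ℝ) < ((m - (j+1) : ℕ):ℝ) := by
        have : 0 < m - (j+1) := by omega
        exact_mod_cast this
      have hw : (0:ℝ) < ((m - (j+2) : ℕ):ℝ) := by
        have : 0 < m - (j+2) := by omega
        exact_mod_cast this
      have g1 : (((m - (j+1) : ℕ):ℝ) * (m.choose (j+1) : ℝ))^2
            * ((((m - j : ℕ):ℝ) * s.esymm j) * (((m - (j+2) : ℕ):ℝ) * s.esymm (j+2)))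
          = (m:ℝ)^4 * (((j+2+d).choose (j+1) : ℝ)^2 * (t.esymm j * t.esymm (j+2))) := by
        rw [q2, ← e1, ← e3]; ring
      have g2 : (((m - j : ℕ):ℝ) * (m.choose j : ℝ))
            * ((((m - (j+2) : ℕ):ℝ) * (m.choose (j+2) : ℝ)))
            * ((((m - (j+1) : ℕ):ℝ) * s.esymm (j+1))^2)
          = (m:ℝ)^4 * (((j+2+d).choose j : ℝ) * ((j+2+d).choose (j+2) : ℝ)
              * t.esymm (j+1)^2) := by
        rw [q1, q3, ← e2]; ring
      have hscaled := mul_le_mul_of_nonneg_left IH (show (0:ℝ) ≤ (m:ℝ)^4 by positivity)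
      have big : (((m - j : ℕ):ℝ) * ((m - (j+1) : ℕ):ℝ)^2 * ((m - (j+2) : ℕ):ℝ))
            * ((m.choose (j+1) : ℝ)^2 * (s.esymm j * s.esymm (j+2)))
          ≤ (((m - j : ℕ):ℝ) * ((m - (j+1) : ℕ):ℝ)^2 * ((m - (j+2) : ℕ):ℝ))
            * ((m.choose j : ℝ) * (m.choose (j+2) : ℝ) * s.esymm (j+1)^2) := by
        calc (((m - j : ℕ):ℝ) * ((m - (j+1) : ℕ):ℝ)^2 * ((m - (j+2) : ℕ):ℝ))
              * ((m.choose (j+1) : ℝ)^2 * (s.esymm j * s.esymm (j+2)))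
            = (((m - (j+1) : ℕ):ℝ) * (m.choose (j+1) : ℝ))^2
              * ((((m - j : ℕ):ℝ) * s.esymm j) * (((m - (j+2) : ℕ):ℝ) * s.esymm (j+2))) := by
              ring
          _ = (m:ℝ)^4 * (((j+2+d).choose (j+1) : ℝ)^2 * (t.esymm j * t.esymm (j+2))) := g1
          _ ≤ (m:ℝ)^4 * (((j+2+d).choose j : ℝ) * ((j+2+d).choose (j+2) : ℝ)
              * t.esymm (j+1)^2) := hscaled
          _ = (((m - j : ℕ):ℝ) * (m.choose j : ℝ))
              * ((((m - (j+2) : ℕ):ℝ) * (m.choose (j+2) : ℝ)))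
              * ((((m - (j+1) : ℕ):ℝ) * s.esymm (j+1))^2) := g2.symm
          _ = (((m - j : ℕ):ℝ) * ((m - (j+1) : ℕ):ℝ)^2 * ((m - (j+2) : ℕ):ℝ))
              * ((m.choose j : ℝ) * (m.choose (j+2) : ℝ) * s.esymm (j+1)^2) := by
              ring
      exact le_of_mul_le_mul_left big (by positivity)


variable {ι : Type*} [DecidableEq ι]

noncomputable def E (j : ℕ) (A : Finset ι) (x : ι → ℝ) : ℝ :=
  ∑ s ∈ A.powersetCard j, ∏ i ∈ s, x i

lemma E_eq (j : ℕ) (A : Finset ι) (x : ι → ℝ) : E j A x = (A.val.map x).esymm j :=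
  (Finset.esymm_map_val x A j).symm

lemma E_zero (A : Finset ι) (x : ι → ℝ) : E 0 A x = 1 := by
  rw [E_eq, mesymm_zero]

lemma E_card_lt {j : ℕ} (A : Finset ι) (x : ι → ℝ) (h : A.card < j) : E j A x = 0 := by
  rw [E_eq, mesymm_eq_zero]
  simpa using h

lemma E_one (A : Finset ι) (x : ι → ℝ) : E 1 A x = ∑ i ∈ A, x i := by
  rw [E_eq, mesymm_one]
  rfl

lemma E_insert {a : ι} {A : Finset ι} (h : a ∉ A) (j : ℕ) (x : ι → ℝ) :
    E (j+1) (insert a A) x = E (j+1) A x + x a * E j A x := by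
  rw [E_eq, E_eq, E_eq, Finset.insert_val_of_notMem h, Multiset.map_cons, mesymm_cons]

lemma E_erase {i : ι} {A : Finset ι} (h : i ∈ A) (j : ℕ) (x : ι → ℝ) :
    E (j+1) A x = E (j+1) (A.erase i) x + x i * E j (A.erase i) x := by
  conv_lhs => rw [← Finset.insert_erase h]
  rw [E_insert (Finset.notMem_erase i A)]

lemma E_smul (j : ℕ) (A : Finset ι) (x : ι → ℝ) (t : ℝ) :
    E j A (fun i => t * x i) = t^j * E j A x := by
  rw [E_eq, E_eq, ← mesymm_smul, Multiset.map_map]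
  rfl

lemma L5 (A : Finset ι) (x : ι → ℝ) : ∀ j : ℕ,
    ∑ i ∈ A, x i * E j (A.erase i) x = ((j:ℝ)+1) * E (j+1) A x := by
  induction A using Finset.induction_on with
  | empty =>
      intro j
      rw [Finset.sum_empty, E_card_lt (∅ : Finset ι) x (by simp : (∅ : Finset ι).card < j+1)]
      ring
  | insert a B ha ih =>
      intro j
      rw [Finset.sum_insert ha, Finset.erase_insert ha]
      have herase : ∀ i ∈ B, (insert a B).erase i = insert a (B.erase i) := by
        intro i hi
        exact Finset.erase_insert_of_ne (fun hai => ha (hai ▸ hi))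
      cases j with
      | zero =>
          simp only [E_zero, mul_one]
          rw [E_one, Finset.sum_insert ha]
          norm_num
      | succ j' =>
          have hstep : ∀ i ∈ B, x i * E (j'+1) ((insert a B).erase i) x
              = x i * E (j'+1) (B.erase i) x + x a * (x i * E j' (B.erase i) x) := by
            intro i hi
            rw [herase i hi, E_insert (fun hmem => ha (Finset.mem_of_mem_erase hmem))]
            ring
          rw [Finset.sum_congr rfl hstep, Finset.sum_add_distrib, ← Finset.mul_sum,
            ih (j'+1), ih j', E_insert ha]
          push_cast
          ring

lemma main_id (A : Finset ι) (x : ι → ℝ) (j : ℕ) :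
    E 1 A x * E (j+1) A x
      = ((j:ℝ)+2) * E (j+2) A x + ∑ i ∈ A, (x i)^2 * E j (A.erase i) x := by
  rw [E_one, Finset.sum_mul]
  have hper : ∀ i ∈ A, x i * E (j+1) A x
      = x i * E (j+1) (A.erase i) x + (x i)^2 * E j (A.erase i) x := by
    intro i hi
    rw [E_erase hi j x]
    ring
  rw [Finset.sum_congr rfl hper, Finset.sum_add_distrib, L5 A x (j+1)]
  push_cast
  ring

lemma newton_weak (A : Finset ι) (x : ι → ℝ) (j : ℕ) (hcard : j + 2 ≤ A.card)
    (hnn : 0 ≤ E j A x * E (j+2) A x) :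
    E j A x * E (j+2) A x ≤ E (j+1) A x ^ 2 := by
  have hs : Multiset.card (A.val.map x) = A.card := by simp
  have hAc : A.card = j + 2 + (A.card - (j+2)) := by omega
  have hN := newtonM (A.card - (j+2)) j (A.val.map x) (by omega)
  rw [← hAc] at hN
  rw [E_eq, E_eq, E_eq] at *
  have hLC : (A.card.choose j : ℝ) * (A.card.choose (j+2) : ℝ)
      ≤ (A.card.choose (j+1) : ℝ)^2 := by
    have := chooseLC A.card j hcard
    rw [pow_two]
    exact_mod_cast this
  have hpos : (0:ℝ) < (A.card.choose j : ℝ) * (A.card.choose (j+2):ℝ) := by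
    have h1 : 0 < A.card.choose j := Nat.choose_pos (by omega)
    have h2 : 0 < A.card.choose (j+2) := Nat.choose_pos (by omega)
    positivity
  set e0 := (A.val.map x).esymm j
  set e1 := (A.val.map x).esymm (j+1)
  set e2 := (A.val.map x).esymm (j+2)
  have step1 : (A.card.choose j : ℝ) * (A.card.choose (j+2) : ℝ) * (e0 * e2)
      ≤ (A.card.choose (j+1) : ℝ)^2 * (e0 * e2) :=
    mul_le_mul_of_nonneg_right hLC hnn
  have step2 := le_trans step1 hN
  have step2' : (((A.card.choose j : ℝ) * (A.card.choose (j+2) : ℝ))) * (e0 * e2)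
      ≤ (((A.card.choose j : ℝ) * (A.card.choose (j+2) : ℝ))) * (e1^2) := by
    linarith [step2]
  exact le_of_mul_le_mul_left step2' hpos


def G (k : ℕ) (A : Finset ι) (x : ι → ℝ) : Prop := ∀ j, 1 ≤ j → j ≤ k → 0 < E j A x

lemma G_mono {k k' : ℕ} (h : k' ≤ k) {A : Finset ι} {x : ι → ℝ} (hG : G k A x) : G k' A x :=
  fun j h1 h2 => hG j h1 (h2.trans h)

lemma G_pos_low {k : ℕ} {A : Finset ι} {x : ι → ℝ} (hG : G k A x) : 0 < E k A x := by
  rcases Nat.eq_zero_or_pos k with rfl | hk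
  · rw [E_zero]; norm_num
  · exact hG k hk le_rfl

lemma cs_aux {a b dx sx dy sy dz sz : ℝ} (hdx : 0 < dx) (hsx : 0 < sx) (hdy : 0 < dy)
    (hsy : 0 < sy) (hdz : 0 < dz) (hsz : 0 < sz)
    (hsum : dx/sx + dy/sy ≤ dz/sz) :
    (a+b)^2 * sz / dz ≤ a^2 * sx / dx + b^2 * sy / dy := by
  have hα : 0 < dx/sx := div_pos hdx hsx
  have hβ : 0 < dy/sy := div_pos hdy hsy
  have hγ : 0 < dz/sz := div_pos hdz hsz
  have h1 : (a+b)^2 * sz / dz = (a+b)^2 / (dz/sz) := by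
    rw [div_div_eq_mul_div]
  have h2 : a^2 * sx / dx = a^2 / (dx/sx) := by rw [div_div_eq_mul_div]
  have h3 : b^2 * sy / dy = b^2 / (dy/sy) := by rw [div_div_eq_mul_div]
  rw [h1, h2, h3]
  have step1 : (a+b)^2 / (dz/sz) ≤ (a+b)^2 / (dx/sx + dy/sy) := by
    apply div_le_div_of_nonneg_left (sq_nonneg _) (by positivity)
    exact hsum
  refine le_trans step1 ?_
  rw [div_add_div _ _ (ne_of_gt hα) (ne_of_gt hβ), div_le_div_iff₀ (by positivity) (by positivity)]
  nlinarith [sq_nonneg (a * (dy/sy) - b * (dx/sx)), mul_pos hα hβ, sq_nonneg a, sq_nonneg b,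
    mul_pos (mul_pos hα hβ) (add_pos hα hβ)]

theorem RBA (k : ℕ) :
    (∀ (A : Finset ι) (x : ι → ℝ) (i : ι), i ∈ A → G (k+1) A x → G k (A.erase i) x) ∧
    (∀ (A : Finset ι) (x y z : ι → ℝ), (∀ i, z i = x i + y i) → G (k+1) A x → G (k+1) A y →
      E (k+1) A x / E k A x + E (k+1) A y / E k A y ≤ E (k+1) A z / E k A z) ∧
    (∀ (A : Finset ι) (x y z : ι → ℝ), (∀ i, z i = x i + y i) → G (k+1) A x → G (k+1) A y →
      G (k+1) A z) := by
  induction k with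
  | zero =>
      refine ⟨?_, ?_, ?_⟩
      · intro A x i _ _ j h1 h2
        omega
      · intro A x y z hz _ _
        rw [E_zero, E_zero, E_zero, div_one, div_one, div_one, E_one, E_one, E_one]
        rw [Finset.sum_congr rfl (fun i _ => hz i), Finset.sum_add_distrib]
      · intro A x y z hz hx hy j h1 h2
        have hj : j = 1 := by omega
        subst hj
        rw [E_one, Finset.sum_congr rfl (fun i _ => hz i), Finset.sum_add_distrib]
        have h1' := hx 1 le_rfl le_rfl
        have h2' := hy 1 le_rfl le_rfl
        rw [E_one] at h1' h2'
        linarith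
  | succ k IH =>
      obtain ⟨hR, hB, hA⟩ := IH
      -- restriction property at level k+2
      have hR' : ∀ (A : Finset ι) (x : ι → ℝ) (i : ι), i ∈ A → G (k+2) A x →
          G (k+1) (A.erase i) x := by
        intro A x i hiA hGx
        have hG' : G k (A.erase i) x := hR A x i hiA (G_mono (by omega) hGx)
        intro j hj1 hj2
        rcases lt_or_eq_of_le hj2 with hlt | heq
        · exact hG' j hj1 (by omega)
        · subst heq
          by_contra hcon
          push_neg at hcon
          have hek : 0 < E k (A.erase i) x := G_pos_low hG'
          have h1 : 0 < E (k+1) A x := hGx (k+1) (by omega) (by omega)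
          have h2 : 0 < E (k+2) A x := hGx (k+2) (by omega) (by omega)
          have heq1 := E_erase hiA k x
          have heq2 := E_erase hiA (k+1) x
          have hxi : 0 < x i := by
            by_contra hxc
            push_neg at hxc
            nlinarith [mul_nonpos_of_nonpos_of_nonneg hxc hek.le]
          have he2' : 0 < E (k+2) (A.erase i) x := by
            nlinarith [mul_nonpos_of_nonneg_of_nonpos hxi.le hcon]
          have hcA' : k + 2 ≤ (A.erase i).card := by
            by_contra hc
            push_neg at hc
            rw [E_card_lt (A.erase i) x (by omega)] at he2'
            exact lt_irrefl _ he2'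
          have hnn : 0 ≤ E k (A.erase i) x * E (k+2) (A.erase i) x :=
            (mul_pos hek he2').le
          have hnewt := newton_weak (A.erase i) x k hcA' hnn
          have hA1 : -E (k+1) (A.erase i) x < x i * E k (A.erase i) x := by linarith
          have hA2 : x i * (-E (k+1) (A.erase i) x) < E (k+2) (A.erase i) x := by linarith
          have hprod :
              (-E (k+1) (A.erase i) x) * (x i * (-E (k+1) (A.erase i) x))
                < (x i * E k (A.erase i) x) * E (k+2) (A.erase i) x := by
            apply mul_lt_mul'' hA1 hA2 (by linarith)
            exact mul_nonneg hxi.le (by linarith)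
          nlinarith [mul_le_mul_of_nonneg_left hnewt hxi.le]
      -- superadditivity at level k+2
      have hB' : ∀ (A : Finset ι) (x y z : ι → ℝ), (∀ i, z i = x i + y i) →
          G (k+2) A x → G (k+2) A y →
          E (k+2) A x / E (k+1) A x + E (k+2) A y / E (k+1) A y
            ≤ E (k+2) A z / E (k+1) A z := by
        intro A x y z hzdef hGx hGy
        have hGx1 : G (k+1) A x := G_mono (by omega) hGx
        have hGy1 : G (k+1) A y := G_mono (by omega) hGy
        have hGz1 : G (k+1) A z := hA A x y z hzdef hGx1 hGy1
        have hDx : 0 < E (k+1) A x := hGx1 (k+1) (by omega) le_rfl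
        have hDy : 0 < E (k+1) A y := hGy1 (k+1) (by omega) le_rfl
        have hDz : 0 < E (k+1) A z := hGz1 (k+1) (by omega) le_rfl
        have hNx : 0 < E (k+2) A x := hGx (k+2) (by omega) le_rfl
        have hNy : 0 < E (k+2) A y := hGy (k+2) (by omega) le_rfl
        -- per-index positivity
        have hGex : ∀ i ∈ A, G (k+1) (A.erase i) x := fun i hi => hR' A x i hi hGx
        have hGey : ∀ i ∈ A, G (k+1) (A.erase i) y := fun i hi => hR' A y i hi hGy
        have hGez : ∀ i ∈ A, G (k+1) (A.erase i) z := fun i hi =>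
          hA (A.erase i) x y z hzdef (hGex i hi) (hGey i hi)
        have hSx : ∀ i ∈ A, 0 < E k (A.erase i) x := fun i hi =>
          G_pos_low (G_mono (by omega) (hGex i hi))
        have hSy : ∀ i ∈ A, 0 < E k (A.erase i) y := fun i hi =>
          G_pos_low (G_mono (by omega) (hGey i hi))
        have hSz : ∀ i ∈ A, 0 < E k (A.erase i) z := fun i hi =>
          G_pos_low (G_mono (by omega) (hGez i hi))
        -- the key per-index ratio inequality
        have hkey : ∀ i ∈ A,
            E (k+1) A x / E k (A.erase i) x + E (k+1) A y / E k (A.erase i) y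
              ≤ E (k+1) A z / E k (A.erase i) z := by
          intro i hi
          have hratio := hB (A.erase i) x y z hzdef (hGex i hi) (hGey i hi)
          have hw : ∀ (w : ι → ℝ), 0 < E k (A.erase i) w →
              E (k+1) A w / E k (A.erase i) w
                = w i + E (k+1) (A.erase i) w / E k (A.erase i) w := by
            intro w hSw
            rw [E_erase hi k w, add_div, mul_div_assoc, div_self (ne_of_gt hSw), mul_one]
            ring
          rw [hw x (hSx i hi), hw y (hSy i hi), hw z (hSz i hi), hzdef i]
          linarith
        have hper : ∀ i ∈ A,
            (z i)^2 * E k (A.erase i) z / E (k+1) A z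
              ≤ (x i)^2 * E k (A.erase i) x / E (k+1) A x
                + (y i)^2 * E k (A.erase i) y / E (k+1) A y := by
          intro i hi
          rw [hzdef i]
          exact cs_aux hDx (hSx i hi) hDy (hSy i hi) hDz (hSz i hi) (hkey i hi)
        have hsummed := Finset.sum_le_sum hper
        rw [Finset.sum_add_distrib] at hsummed
        have hdivx : ∑ i ∈ A, (x i)^2 * E k (A.erase i) x / E (k+1) A x
            = (∑ i ∈ A, (x i)^2 * E k (A.erase i) x) / E (k+1) A x := by
          rw [Finset.sum_div]
        have hdivy : ∑ i ∈ A, (y i)^2 * E k (A.erase i) y / E (k+1) A y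
            = (∑ i ∈ A, (y i)^2 * E k (A.erase i) y) / E (k+1) A y := by
          rw [Finset.sum_div]
        have hdivz : ∑ i ∈ A, (z i)^2 * E k (A.erase i) z / E (k+1) A z
            = (∑ i ∈ A, (z i)^2 * E k (A.erase i) z) / E (k+1) A z := by
          rw [Finset.sum_div]
        rw [hdivx, hdivy, hdivz] at hsummed
        -- main identity
        have hmx := main_id A x k
        have hmy := main_id A y k
        have hmz := main_id A z k
        have hE1 : E 1 A z = E 1 A x + E 1 A y := by
          rw [E_one, E_one, E_one, Finset.sum_congr rfl (fun i _ => hzdef i),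
            Finset.sum_add_distrib]
        have hfrac : ∀ (w : ι → ℝ), 0 < E (k+1) A w →
            (∑ i ∈ A, (w i)^2 * E k (A.erase i) w) / E (k+1) A w
              = E 1 A w - ((k:ℝ)+2) * (E (k+2) A w / E (k+1) A w) := by
          intro w hDw
          have hmw := main_id A w k
          have hSig : ∑ i ∈ A, (w i)^2 * E k (A.erase i) w
              = E 1 A w * E (k+1) A w - ((k:ℝ)+2) * E (k+2) A w := by linarith
          rw [hSig, sub_div, mul_div_assoc, mul_div_assoc,
            div_self (ne_of_gt hDw), mul_one]
        rw [hfrac x hDx, hfrac y hDy, hfrac z hDz, hE1] at hsummed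
        have hc : (0:ℝ) < (k:ℝ)+2 := by positivity
        have final : ((k:ℝ)+2) * (E (k+2) A x / E (k+1) A x + E (k+2) A y / E (k+1) A y)
            ≤ ((k:ℝ)+2) * (E (k+2) A z / E (k+1) A z) := by linarith
        exact le_of_mul_le_mul_left final hc
      -- cone additivity at level k+2
      have hA' : ∀ (A : Finset ι) (x y z : ι → ℝ), (∀ i, z i = x i + y i) →
          G (k+2) A x → G (k+2) A y → G (k+2) A z := by
        intro A x y z hzdef hGx hGy
        have hGz1 : G (k+1) A z :=
          hA A x y z hzdef (G_mono (by omega) hGx) (G_mono (by omega) hGy)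
        intro j hj1 hj2
        rcases lt_or_eq_of_le hj2 with hlt | heq
        · exact hGz1 j hj1 (by omega)
        · subst heq
          have hDx : 0 < E (k+1) A x := hGx (k+1) (by omega) (by omega)
          have hDy : 0 < E (k+1) A y := hGy (k+1) (by omega) (by omega)
          have hDz : 0 < E (k+1) A z := hGz1 (k+1) (by omega) le_rfl
          have hNx : 0 < E (k+2) A x := hGx (k+2) (by omega) le_rfl
          have hNy : 0 < E (k+2) A y := hGy (k+2) (by omega) le_rfl
          have hsup := hB' A x y z hzdef hGx hGy
          have hfr : 0 < E (k+2) A z / E (k+1) A z :=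
            lt_of_lt_of_le (add_pos (div_pos hNx hDx) (div_pos hNy hDy)) hsup
          have := mul_pos hfr hDz
          rwa [div_mul_cancel₀ _ (ne_of_gt hDz)] at this
      exact ⟨hR', hB', hA'⟩



lemma E_def {ι : Type*} [DecidableEq ι] (j : ℕ) (A : Finset ι) (x : ι → ℝ) :
    E j A x = ∑ s ∈ A.powersetCard j, ∏ i ∈ s, x i := rfl

end Stmt9

open Stmt9 in
/-- For `1 ≤ k ≤ n`, the quotient `F = H_k / H_{k-1}` is concave on the
Garding cone `Γ_k`, positively homogeneous of degree one there, and normalized by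
`F(1, …, 1) = 1`. -/
theorem stmt_9 (n k : ℕ) (hn : 1 ≤ n) (hk1 : 1 ≤ k) (hkn : k ≤ n)
    (F : (Fin n → ℝ) → ℝ) (hF : F = fun κ => Hsym n k κ / Hsym n (k - 1) κ) :
    ConcaveOn ℝ (GardingCone n k) F ∧
    (∀ κ ∈ GardingCone n k, ∀ t : ℝ, 0 < t → F (t • κ) = t * F κ) ∧
    F (fun _ => 1) = 1 := by
  obtain ⟨k₀, rfl⟩ : ∃ k₀, k = k₀ + 1 := ⟨k - 1, by omega⟩
  have hk1' : k₀ + 1 - 1 = k₀ := by omega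
  rw [hk1'] at hF
  obtain ⟨hR, hB, hA⟩ := RBA (ι := Fin n) k₀
  -- basic facts about Hsym vs E
  have hHE : ∀ (j : ℕ) (κ : Fin n → ℝ),
      Hsym n j κ = ((n.choose j : ℝ))⁻¹ * E j Finset.univ κ := by
    intro j κ
    rw [Hsym, E_def]
  have hchoosepos : ∀ j : ℕ, j ≤ n → (0:ℝ) < (n.choose j : ℝ) := by
    intro j hj
    exact_mod_cast Nat.choose_pos hj
  have hmem : ∀ κ : Fin n → ℝ, κ ∈ GardingCone n (k₀+1) ↔ G (k₀+1) Finset.univ κ := by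
    intro κ
    constructor
    · intro hκ j hj1 hj2
      have := hκ j hj1 hj2
      rw [hHE j κ] at this
      have hc : (0:ℝ) < ((n.choose j : ℝ))⁻¹ := by
        have := hchoosepos j (by omega)
        positivity
      nlinarith
    · intro hκ j hj1 hj2
      rw [hHE j κ]
      have hc : (0:ℝ) < ((n.choose j : ℝ))⁻¹ := by
        have := hchoosepos j (by omega)
        positivity
      exact mul_pos hc (hκ j hj1 hj2)
  -- F in terms of E
  set c : ℝ := (n.choose k₀ : ℝ) / (n.choose (k₀+1) : ℝ) with hc
  have hcpos : 0 < c := div_pos (hchoosepos k₀ (by omega)) (hchoosepos (k₀+1) (by omega))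
  have hFeq : ∀ κ : Fin n → ℝ,
      F κ = c * (E (k₀+1) Finset.univ κ / E k₀ Finset.univ κ) := by
    intro κ
    rw [hF]
    simp only []
    rw [hHE, hHE, mul_div_mul_comm]
    congr 1
    rw [div_eq_mul_inv, inv_inv, mul_comm, hc, div_eq_mul_inv]
  -- homogeneity
  have hhom : ∀ (κ : Fin n → ℝ) (t : ℝ), 0 < t → F (t • κ) = t * F κ := by
    intro κ t ht
    have hEs : ∀ j, E j (Finset.univ : Finset (Fin n)) (t • κ) = t^j * E j Finset.univ κ := by
      intro j
      rw [show (t • κ) = (fun i => t * κ i) from rfl, E_smul]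
    rw [hFeq, hFeq, hEs, hEs]
    have hpow : t^(k₀+1) = t^k₀ * t := pow_succ t k₀
    rw [hpow]
    have hne : t^k₀ ≠ 0 := pow_ne_zero _ (ne_of_gt ht)
    calc c * ((t ^ k₀ * t * E (k₀+1) Finset.univ κ) / (t ^ k₀ * E k₀ Finset.univ κ))
        = c * ((t ^ k₀ * (t * E (k₀+1) Finset.univ κ)) / (t ^ k₀ * E k₀ Finset.univ κ)) := by
          rw [mul_assoc]
      _ = c * ((t * E (k₀+1) Finset.univ κ) / E k₀ Finset.univ κ) := by
          rw [mul_div_mul_left _ _ hne]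
      _ = t * (c * (E (k₀+1) Finset.univ κ / E k₀ Finset.univ κ)) := by
          rw [mul_div_assoc]; ring
  -- cone closure facts
  have hsmul_mem : ∀ (κ : Fin n → ℝ) (t : ℝ), 0 < t → G (k₀+1) Finset.univ κ →
      G (k₀+1) Finset.univ (t • κ) := by
    intro κ t ht hκ j hj1 hj2
    have hEs : E j Finset.univ (t • κ) = t^j * E j Finset.univ κ := by
      rw [show (t • κ) = (fun i => t * κ i) from rfl, E_smul]
    rw [hEs]
    exact mul_pos (pow_pos ht j) (hκ j hj1 hj2)
  have hadd_mem : ∀ x y : Fin n → ℝ, G (k₀+1) Finset.univ x → G (k₀+1) Finset.univ y →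
      G (k₀+1) Finset.univ (x + y) :=
    fun x y hx hy => hA Finset.univ x y (x + y) (fun i => rfl) hx hy
  refine ⟨⟨?_, ?_⟩, fun κ _ t ht => hhom κ t ht, ?_⟩
  · -- convexity
    rw [convex_iff_forall_pos]
    intro x hx y hy a b ha hb _
    exact (hmem _).mpr (hadd_mem (a • x) (b • y)
      (hsmul_mem x a ha ((hmem x).mp hx)) (hsmul_mem y b hb ((hmem y).mp hy)))
  · -- concavity inequality
    intro x hx y hy a b ha hb hab
    rcases eq_or_lt_of_le ha with heq | ha'
    · have hb1 : b = 1 := by linarith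
      subst hb1
      rw [← heq]
      simp
    rcases eq_or_lt_of_le hb with heq | hb'
    · have ha1 : a = 1 := by linarith
      subst ha1
      rw [← heq]
      simp
    have hgx := (hmem x).mp hx
    have hgy := (hmem y).mp hy
    have hax := hsmul_mem x a ha' hgx
    have hby := hsmul_mem y b hb' hgy
    have hsup := hB Finset.univ (a • x) (b • y) (a • x + b • y) (fun i => rfl) hax hby
    have h2 := mul_le_mul_of_nonneg_left hsup (le_of_lt hcpos)
    rw [mul_add] at h2
    rw [← hFeq, ← hFeq, ← hFeq] at h2
    rw [hhom x a ha', hhom y b hb'] at h2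
    simp only [smul_eq_mul]
    linarith
  · -- normalization
    have hE1 : ∀ j, E j (Finset.univ : Finset (Fin n)) (fun _ => 1) = (n.choose j : ℝ) := by
      intro j
      rw [E_def]
      have hone : ∀ s ∈ (Finset.univ : Finset (Fin n)).powersetCard j,
          (∏ _i ∈ s, (1:ℝ)) = 1 := by
        intro s _
        exact Finset.prod_const_one
      rw [Finset.sum_congr rfl hone, Finset.sum_const, Finset.card_powersetCard,
        Finset.card_univ, Fintype.card_fin, nsmul_eq_mul, mul_one]
    rw [hF]
    simp only []
    rw [hHE, hHE, hE1, hE1]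
    rw [inv_mul_cancel₀ (ne_of_gt (hchoosepos (k₀+1) (by omega))),
      inv_mul_cancel₀ (ne_of_gt (hchoosepos k₀ (by omega)))]
    norm_num
end

section
/- For n ≥ 1, 1 ≤ k ≤ n, let F(κ) = H_k(κ)/H_{k−1}(κ). Then for every κ in the positive cone (0, ∞)ⁿ, the sum of the partial derivatives of F satisfies 1 ≤ Σ_{i=1}^{n} ∂F/∂κ_i(κ) ≤ k. -/
open Finset

/-- Normalized elementary symmetric function of a multiset. -/
noncomputable def esN (s : Multiset ℝ) (j : ℕ) : ℝ :=
  (((Multiset.card s).choose j : ℝ))⁻¹ * s.esymm j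

lemma esymm_zero' (s : Multiset ℝ) : s.esymm 0 = 1 := by
  simp [Multiset.esymm, Multiset.powersetCard_zero_left]

lemma esymm_nonneg (s : Multiset ℝ) (hs : ∀ x ∈ s, 0 ≤ x) (j : ℕ) : 0 ≤ s.esymm j := by
  apply Multiset.sum_nonneg
  intro x hx
  simp only [Multiset.mem_map] at hx
  obtain ⟨t, ht, rfl⟩ := hx
  rw [Multiset.mem_powersetCard] at ht
  exact Multiset.prod_nonneg fun y hy => hs y (Multiset.mem_of_le ht.1 hy)

lemma esymm_pos (s : Multiset ℝ) (hs : ∀ x ∈ s, 0 < x) (j : ℕ) (hj : j ≤ Multiset.card s) :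
    0 < s.esymm j := by
  have hne : (s.powersetCard j).map Multiset.prod ≠ 0 := by
    rw [ne_eq, ← Multiset.card_eq_zero, Multiset.card_map, Multiset.card_powersetCard]
    exact Nat.choose_pos hj |>.ne'
  rcases Multiset.exists_mem_of_ne_zero hne with ⟨x, hx⟩
  have hall : ∀ x ∈ (s.powersetCard j).map Multiset.prod, 0 < x := by
    intro x hx
    simp only [Multiset.mem_map] at hx
    obtain ⟨t, ht, rfl⟩ := hx
    rw [Multiset.mem_powersetCard] at ht
    exact Multiset.prod_pos fun y hy => hs y (Multiset.mem_of_le ht.1 hy)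
  calc (0:ℝ) < x := hall x hx
  _ ≤ _ := Multiset.single_le_sum (fun y hy => (hall y hy).le) x hx

lemma esymm_eq_zero (s : Multiset ℝ) (j : ℕ) (hj : Multiset.card s < j) : s.esymm j = 0 := by
  have : s.powersetCard j = 0 := by
    rw [← Multiset.card_eq_zero, Multiset.card_powersetCard, Nat.choose_eq_zero_of_lt hj]
  simp [Multiset.esymm, this]

lemma esymm_cons (a : ℝ) (s : Multiset ℝ) (j : ℕ) :
    (a ::ₘ s).esymm (j+1) = s.esymm (j+1) + a * s.esymm j := by
  simp only [Multiset.esymm, Multiset.powersetCard_cons, Multiset.map_add, Multiset.sum_add,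
    Multiset.map_map, Function.comp_def, Multiset.prod_cons]
  rw [Multiset.sum_map_mul_left]

lemma esN_zero (s : Multiset ℝ) : esN s 0 = 1 := by simp [esN, esymm_zero']

lemma esN_nonneg (s : Multiset ℝ) (hs : ∀ x ∈ s, 0 ≤ x) (j : ℕ) : 0 ≤ esN s j := by
  have := esymm_nonneg s hs j
  unfold esN; positivity

lemma esN_pos (s : Multiset ℝ) (hs : ∀ x ∈ s, 0 < x) (j : ℕ) (hj : j ≤ Multiset.card s) :
    0 < esN s j := by
  have h1 := esymm_pos s hs j hj
  have h2 : (0:ℝ) < ((Multiset.card s).choose j : ℝ) := by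
    exact_mod_cast Nat.choose_pos hj
  exact mul_pos (inv_pos.2 h2) h1

lemma esN_eq_zero (s : Multiset ℝ) (j : ℕ) (hj : Multiset.card s < j) : esN s j = 0 := by
  simp [esN, esymm_eq_zero s j hj]

lemma esymm_eq_choose_mul_esN (s : Multiset ℝ) (j : ℕ) :
    s.esymm j = ((Multiset.card s).choose j : ℝ) * esN s j := by
  rcases le_or_gt j (Multiset.card s) with h | h
  · have h2 : (((Multiset.card s).choose j : ℝ)) ≠ 0 := by
      exact_mod_cast (Nat.choose_pos h).ne'
    rw [esN, mul_inv_cancel_left₀ h2]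
  · rw [esymm_eq_zero s j h, esN_eq_zero s j h, mul_zero]

/-- The recursion for normalized elementary symmetric functions when adding one variable. -/
lemma esN_cons (a : ℝ) (s : Multiset ℝ) (j : ℕ) :
    esN (a ::ₘ s) j =
      (((Multiset.card s : ℝ) + 1 - j) * esN s j + j * a * esN s (j-1)) /
        (Multiset.card s + 1) := by
  set m := Multiset.card s with hm
  have hm1 : (0:ℝ) < (m:ℝ) + 1 := by positivity
  rcases Nat.eq_zero_or_pos j with rfl | hj
  · simp [esN_zero]
    field_simp
  obtain ⟨i, rfl⟩ : ∃ i, j = i + 1 := ⟨j - 1, (Nat.succ_pred_eq_of_pos hj).symm⟩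
  have hcard : Multiset.card (a ::ₘ s) = m + 1 := by simp [hm]
  rcases le_or_gt (i+1) (m+1) with h | h
  · -- main case
    have hC : (0:ℝ) < ((m+1).choose (i+1) : ℝ) := by exact_mod_cast Nat.choose_pos h
    have key1 : ((m:ℝ)+1) * (m.choose (i+1) : ℝ) = ((m:ℝ) + 1 - (i+1)) * ((m+1).choose (i+1) : ℝ) := by
      have pascal : (m+1).choose (i+1) = m.choose i + m.choose (i+1) := Nat.choose_succ_succ m i
      have h2 : (m+1) * m.choose i = (m+1).choose (i+1) * (i+1) := Nat.add_one_mul_choose_eq m i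
      have h2' : ((m:ℝ)+1) * (m.choose i : ℝ) = ((m+1).choose (i+1) : ℝ) * ((i:ℝ)+1) := by
        exact_mod_cast h2
      have pascal' : ((m+1).choose (i+1) : ℝ) = (m.choose i : ℝ) + (m.choose (i+1) : ℝ) := by
        exact_mod_cast pascal
      nlinarith [h2', pascal']
    have key2 : ((m:ℝ)+1) * (m.choose i : ℝ) = ((i:ℝ)+1) * ((m+1).choose (i+1) : ℝ) := by
      have h2 : (m+1) * m.choose i = (m+1).choose (i+1) * (i+1) := Nat.add_one_mul_choose_eq m i
      have h2' : ((m:ℝ)+1) * (m.choose i : ℝ) = ((m+1).choose (i+1) : ℝ) * ((i:ℝ)+1) := by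
        exact_mod_cast h2
      linear_combination h2'
    rw [esN, hcard, esymm_cons, esymm_eq_choose_mul_esN s (i+1), esymm_eq_choose_mul_esN s i]
    have : (i + 1 : ℕ) - 1 = i := rfl
    rw [this]
    rw [eq_div_iff hm1.ne']
    rw [inv_mul_eq_div, div_mul_eq_mul_div, div_eq_iff hC.ne']
    push_cast
    linear_combination (esN s (i+1)) * key1 + (a * esN s i) * key2
  · -- degenerate: j > m+1
    have hz1 : esN (a ::ₘ s) (i+1) = 0 := esN_eq_zero _ _ (by omega)
    have hz2 : esN s (i+1) = 0 := esN_eq_zero _ _ (by omega)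
    have hz3 : esN s i = 0 := esN_eq_zero _ _ (by omega)
    have : (i + 1 : ℕ) - 1 = i := rfl
    rw [hz1, this, hz2, hz3]
    simp

/-- Core quadratic inequality for the inductive step of Newton's inequality. -/
lemma core_ineq (e c x w u v z : ℝ) (hx : 0 ≤ x) (hc : 1 ≤ c) (hce : c ≤ e)
    (h1 : (c-1)*(w*v) ≤ (c-1)*u^2) (h2 : (c-1)*(w*z) ≤ (c-1)*(u*v)) (h3 : u*z ≤ v^2) :
    ((e+2-c)*u + (c-1)*x*w) * ((e-c)*z + (c+1)*x*v) ≤ ((e+1-c)*v + c*x*u)^2 := by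
  have key : ((e+1-c)*v + c*x*u)^2 - ((e+2-c)*u + (c-1)*x*w) * ((e-c)*z + (c+1)*x*v)
      = (u*x - v)^2 + (c+1)*x^2*((c-1)*u^2 - (c-1)*(w*v))
        + (e-c)*x*((c-1)*(u*v) - (c-1)*(w*z)) + (e-c)*(e+2-c)*(v^2 - u*z) := by ring
  nlinarith [sq_nonneg (u*x - v), sq_nonneg x,
    mul_nonneg (mul_nonneg (by linarith : (0:ℝ) ≤ c+1) (sq_nonneg x)) (by linarith : (0:ℝ) ≤ (c-1)*u^2 - (c-1)*(w*v)),
    mul_nonneg (mul_nonneg (by linarith : (0:ℝ) ≤ e-c) hx) (by linarith : (0:ℝ) ≤ (c-1)*(u*v) - (c-1)*(w*z)),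
    mul_nonneg (mul_nonneg (by linarith : (0:ℝ) ≤ e-c) (by linarith : (0:ℝ) ≤ e+2-c)) (by linarith : (0:ℝ) ≤ v^2 - u*z)]

/-- Newton's inequality for normalized elementary symmetric functions of positive reals. -/
theorem newton_multiset (s : Multiset ℝ) (hs : ∀ x ∈ s, 0 < x) :
    ∀ k : ℕ, 1 ≤ k → esN s (k-1) * esN s (k+1) ≤ esN s k ^ 2 := by
  induction s using Multiset.induction_on with
  | empty =>
    intro k hk
    rw [esN_eq_zero 0 (k+1) (by simp), mul_zero]
    exact sq_nonneg _
  | cons a t ih =>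
    intro k hk
    have ha : 0 < a := hs a (Multiset.mem_cons_self a t)
    have ht : ∀ x ∈ t, 0 < x := fun x hx => hs x (Multiset.mem_cons_of_mem hx)
    have ihn := ih ht
    set m := Multiset.card t with hm
    rcases le_or_gt k m with hkm | hkm
    · -- main case
      have hcard : Multiset.card (a ::ₘ t) = m + 1 := by simp [hm]
      have e1 : esN (a ::ₘ t) (k+1)
          = (((m:ℝ) + 1 - (k+1)) * esN t (k+1) + (k+1) * a * esN t k) / (m+1) := by
        have := esN_cons a t (k+1)
        simpa using this
      have e2 : esN (a ::ₘ t) k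
          = (((m:ℝ) + 1 - k) * esN t k + k * a * esN t (k-1)) / (m+1) := by
        have := esN_cons a t k
        simpa using this
      have e3 : esN (a ::ₘ t) (k-1)
          = (((m:ℝ) + 1 - ((k:ℝ)-1)) * esN t (k-1) + ((k:ℝ)-1) * a * esN t (k-2)) / (m+1) := by
        have := esN_cons a t (k-1)
        rw [this]
        have h1 : ((k-1 : ℕ) : ℝ) = (k:ℝ) - 1 := by
          rw [Nat.cast_sub hk, Nat.cast_one]
        rw [h1]
        have : (k - 1 - 1 : ℕ) = k - 2 := by omega
        rw [this]
      -- nonnegativity facts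
      have hw : 0 ≤ esN t (k-2) := esN_nonneg t (fun x hx => (ht x hx).le) _
      have hu : 0 ≤ esN t (k-1) := esN_nonneg t (fun x hx => (ht x hx).le) _
      have hv : 0 ≤ esN t k := esN_nonneg t (fun x hx => (ht x hx).le) _
      have hz : 0 ≤ esN t (k+1) := esN_nonneg t (fun x hx => (ht x hx).le) _
      have h3 : esN t (k-1) * esN t (k+1) ≤ esN t k ^ 2 := ihn k hk
      have h1 : ((k:ℝ)-1)*(esN t (k-2) * esN t k) ≤ ((k:ℝ)-1)*(esN t (k-1))^2 := by
        rcases Nat.lt_or_ge k 2 with hk2 | hk2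
        · interval_cases k
          simp
        · have := ihn (k-1) (by omega)
          have hkk : k - 1 - 1 = k - 2 := by omega
          have hkk2 : k - 1 + 1 = k := by omega
          rw [hkk, hkk2] at this
          have : esN t (k-2) * esN t k ≤ esN t (k-1)^2 := this
          have hc1 : (0:ℝ) ≤ (k:ℝ) - 1 := by
            have : (1:ℝ) ≤ (k:ℝ) := by exact_mod_cast hk
            linarith
          exact mul_le_mul_of_nonneg_left this hc1
      have h2 : ((k:ℝ)-1)*(esN t (k-2) * esN t (k+1)) ≤ ((k:ℝ)-1)*(esN t (k-1) * esN t k) := by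
        rcases Nat.lt_or_ge k 2 with hk2 | hk2
        · interval_cases k
          simp
        · have hupos : 0 < esN t (k-1) := esN_pos t ht _ (by omega)
          have hvpos : 0 < esN t k := esN_pos t ht _ hkm
          have h1' : esN t (k-2) * esN t k ≤ esN t (k-1)^2 := by
            have := ihn (k-1) (by omega)
            have hkk : k - 1 - 1 = k - 2 := by omega
            have hkk2 : k - 1 + 1 = k := by omega
            rwa [hkk, hkk2] at this
          have hc1 : (0:ℝ) ≤ (k:ℝ) - 1 := by
            have : (1:ℝ) ≤ (k:ℝ) := by exact_mod_cast hk
            linarith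
          have : esN t (k-2) * esN t (k+1) ≤ esN t (k-1) * esN t k := by
            nlinarith [mul_le_mul h1' h3 (mul_nonneg hu hz) (sq_nonneg (esN t (k-1)))]
          exact mul_le_mul_of_nonneg_left this hc1
      have hck : (1:ℝ) ≤ (k:ℝ) := by exact_mod_cast hk
      have hce : (k:ℝ) ≤ (m:ℝ) := by exact_mod_cast hkm
      have hcore := core_ineq (m:ℝ) (k:ℝ) a (esN t (k-2)) (esN t (k-1)) (esN t k)
        (esN t (k+1)) ha.le hck hce h1 h2 h3
      rw [e1, e2, e3]
      have hm1 : (0:ℝ) < (m:ℝ) + 1 := by positivity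
      rw [div_mul_div_comm, div_pow, div_le_div_iff₀ (by positivity) (by positivity)]
      calc (((m:ℝ) + 1 - ((k:ℝ)-1)) * esN t (k-1) + ((k:ℝ)-1) * a * esN t (k-2)) *
            ((((m:ℝ) + 1 - ((k:ℝ)+1))) * esN t (k+1) + ((k:ℝ)+1) * a * esN t k) * ((m:ℝ)+1)^2
          = (((m:ℝ)+2-(k:ℝ)) * esN t (k-1) + ((k:ℝ)-1) * a * esN t (k-2)) *
            (((m:ℝ)-(k:ℝ)) * esN t (k+1) + ((k:ℝ)+1) * a * esN t k) * ((m:ℝ)+1)^2 := by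
            push_cast; ring
        _ ≤ (((m:ℝ)+1-(k:ℝ)) * esN t k + (k:ℝ) * a * esN t (k-1))^2 * ((m:ℝ)+1)^2 := by
            have := mul_le_mul_of_nonneg_right hcore (by positivity : (0:ℝ) ≤ ((m:ℝ)+1)^2)
            calc _ ≤ (((m:ℝ)+1-(k:ℝ)) * esN t k + (k:ℝ) * a * esN t (k-1))^2 * ((m:ℝ)+1)^2 := by
                  nlinarith [this]
              _ = _ := by ring
        _ = (((m:ℝ) + 1 - (k:ℝ)) * esN t k + (k:ℝ) * a * esN t (k-1)) ^ 2 * (((m:ℝ)+1)*((m:ℝ)+1)) := by ring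
    · -- degenerate case k > m
      have : esN (a ::ₘ t) (k+1) = 0 := by
        apply esN_eq_zero
        simp [hm]
        omega
      rw [this, mul_zero]
      exact sq_nonneg _

lemma Hsym_eq_esN (n j : ℕ) (κ : Fin n → ℝ) :
    Hsym n j κ = esN (Multiset.map κ (Finset.univ : Finset (Fin n)).val) j := by
  have h1 := Finset.esymm_map_val κ (Finset.univ : Finset (Fin n)) j
  have h2 : Multiset.card (Multiset.map κ (Finset.univ : Finset (Fin n)).val) = n := by
    simp
  rw [esN, h2, h1, Hsym]

lemma Hsym_pos {n j : ℕ} (hj : j ≤ n) {κ : Fin n → ℝ} (hκ : ∀ i, 0 < κ i) :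
    0 < Hsym n j κ := by
  rw [Hsym_eq_esN]
  apply esN_pos
  · intro x hx
    simp only [Multiset.mem_map] at hx
    obtain ⟨i, _, rfl⟩ := hx
    exact hκ i
  · simpa using hj

lemma Hsym_newton {n j : ℕ} (hj : 1 ≤ j) {κ : Fin n → ℝ} (hκ : ∀ i, 0 < κ i) :
    Hsym n (j-1) κ * Hsym n (j+1) κ ≤ Hsym n j κ ^ 2 := by
  rw [Hsym_eq_esN, Hsym_eq_esN, Hsym_eq_esN]
  apply newton_multiset _ _ j hj
  intro x hx
  simp only [Multiset.mem_map] at hx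
  obtain ⟨i, _, rfl⟩ := hx
  exact hκ i

lemma Hsym_nonneg {n j : ℕ} {κ : Fin n → ℝ} (hκ : ∀ i, 0 < κ i) : 0 ≤ Hsym n j κ := by
  rw [Hsym_eq_esN]
  apply esN_nonneg
  intro x hx
  simp only [Multiset.mem_map] at hx
  obtain ⟨i, _, rfl⟩ := hx
  exact (hκ i).le

open ContinuousLinearMap in
lemma hasFDerivAt_Hsym (n j : ℕ) (κ : Fin n → ℝ) :
    HasFDerivAt (fun x : Fin n → ℝ => Hsym n j x)
      (((n.choose j : ℝ))⁻¹ • ∑ s ∈ Finset.powersetCard j (Finset.univ : Finset (Fin n)),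
        ∑ i ∈ s, (∏ l ∈ s.erase i, κ l) • (proj i : (Fin n → ℝ) →L[ℝ] ℝ)) κ := by
  unfold Hsym
  apply HasFDerivAt.const_mul
  apply HasFDerivAt.fun_sum
  intro s _
  exact HasFDerivAt.finset_prod (fun i _ => hasFDerivAt_apply i κ)

lemma key_sum (n j : ℕ) (hj : 1 ≤ j) (κ : Fin n → ℝ) :
    ∑ s ∈ Finset.powersetCard j (Finset.univ : Finset (Fin n)), ∑ i ∈ s, ∏ l ∈ s.erase i, κ l
    = ((n - (j-1) : ℕ) : ℝ) *
        ∑ t ∈ Finset.powersetCard (j-1) (Finset.univ : Finset (Fin n)), ∏ l ∈ t, κ l := by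
  classical
  rw [← Finset.sum_sigma (Finset.powersetCard j (Finset.univ : Finset (Fin n))) (fun s => s)
    (fun x => ∏ l ∈ x.1.erase x.2, κ l)]
  have hrhs : ((n - (j-1) : ℕ) : ℝ) *
        ∑ t ∈ Finset.powersetCard (j-1) (Finset.univ : Finset (Fin n)), ∏ l ∈ t, κ l
      = ∑ x ∈ (Finset.powersetCard (j-1) (Finset.univ : Finset (Fin n))).sigma (fun t => tᶜ),
          ∏ l ∈ x.1, κ l := by
    rw [Finset.sum_sigma]
    rw [Finset.mul_sum]
    apply Finset.sum_congr rfl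
    intro t ht
    have : ∑ s ∈ tᶜ, ∏ l ∈ (⟨t, s⟩ : Σ _ : Finset (Fin n), Fin n).fst, κ l
        = (tᶜ.card : ℝ) * ∏ l ∈ t, κ l := by
      have h0 : ∑ s ∈ tᶜ, ∏ l ∈ (⟨t, s⟩ : Σ _ : Finset (Fin n), Fin n).fst, κ l
          = ∑ _s ∈ tᶜ, ∏ l ∈ t, κ l := rfl
      rw [h0, Finset.sum_const, nsmul_eq_mul]
    rw [this, Finset.card_compl, Fintype.card_fin]
    rw [Finset.mem_powersetCard_univ] at ht
    rw [ht]
  rw [hrhs]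
  apply Finset.sum_nbij' (i := fun x => (⟨x.1.erase x.2, x.2⟩ : Σ _ : Finset (Fin n), Fin n))
    (j := fun x => (⟨insert x.2 x.1, x.2⟩ : Σ _ : Finset (Fin n), Fin n))
  · rintro ⟨s, i⟩ hx
    rw [Finset.mem_sigma] at hx ⊢
    obtain ⟨hs, hi⟩ := hx
    rw [Finset.mem_powersetCard_univ] at hs
    constructor
    · rw [Finset.mem_powersetCard_univ, Finset.card_erase_of_mem hi, hs]
    · simp [Finset.mem_compl]
  · rintro ⟨t, i⟩ hx
    rw [Finset.mem_sigma] at hx ⊢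
    obtain ⟨ht, hi⟩ := hx
    rw [Finset.mem_powersetCard_univ] at ht
    rw [Finset.mem_compl] at hi
    constructor
    · rw [Finset.mem_powersetCard_univ, Finset.card_insert_of_notMem hi, ht]
      omega
    · exact Finset.mem_insert_self _ _
  · rintro ⟨s, i⟩ hx
    rw [Finset.mem_sigma] at hx
    simp only []
    congr 1
    exact Finset.insert_erase hx.2
  · rintro ⟨t, i⟩ hx
    rw [Finset.mem_sigma] at hx
    rw [Finset.mem_compl] at hx
    simp only []
    congr 1
    exact Finset.erase_insert hx.2
  · rintro ⟨s, i⟩ _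
    rfl

open ContinuousLinearMap in
lemma Hsym_deriv_one (n j : ℕ) (hjn : j ≤ n) (κ : Fin n → ℝ) :
    (((n.choose j : ℝ))⁻¹ • ∑ s ∈ Finset.powersetCard j (Finset.univ : Finset (Fin n)),
        ∑ i ∈ s, (∏ l ∈ s.erase i, κ l) • (proj i : (Fin n → ℝ) →L[ℝ] ℝ))
      (fun _ => (1:ℝ)) = (j:ℝ) * Hsym n (j-1) κ := by
  rcases Nat.eq_zero_or_pos j with rfl | hj
  · simp
  have happ : (((n.choose j : ℝ))⁻¹ • ∑ s ∈ Finset.powersetCard j (Finset.univ : Finset (Fin n)),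
        ∑ i ∈ s, (∏ l ∈ s.erase i, κ l) • (proj i : (Fin n → ℝ) →L[ℝ] ℝ))
      (fun _ => (1:ℝ))
      = ((n.choose j : ℝ))⁻¹ * ∑ s ∈ Finset.powersetCard j (Finset.univ : Finset (Fin n)),
          ∑ i ∈ s, ∏ l ∈ s.erase i, κ l := by
    simp [ContinuousLinearMap.smul_apply, ContinuousLinearMap.sum_apply,
      ContinuousLinearMap.proj_apply, smul_eq_mul]
  rw [happ, key_sum n j hj κ]
  have hC : ((n.choose j : ℝ)) ≠ 0 := by
    exact_mod_cast (Nat.choose_pos hjn).ne'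
  have hC' : ((n.choose (j-1) : ℝ)) ≠ 0 := by
    exact_mod_cast (Nat.choose_pos (le_trans (Nat.sub_le j 1) hjn)).ne'
  have hsum : ∑ t ∈ Finset.powersetCard (j-1) (Finset.univ : Finset (Fin n)), ∏ l ∈ t, κ l
      = (n.choose (j-1) : ℝ) * Hsym n (j-1) κ := by
    rw [Hsym]
    field_simp
  rw [hsum]
  have hid : ((n.choose j : ℝ)) * (j : ℝ) = ((n.choose (j-1) : ℝ)) * ((n - (j-1) : ℕ) : ℝ) := by
    have h := Nat.choose_succ_right_eq n (j-1)
    have h2 : (j - 1) + 1 = j := Nat.succ_pred_eq_of_pos hj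
    rw [h2] at h
    exact_mod_cast h
  field_simp
  linear_combination (-(Hsym n (j-1) κ)) * hid


/-- For `1 ≤ k ≤ n` and `F = H_k / H_{k-1}`, at every `κ` in the
positive cone the sum of the partial derivatives of `F` satisfies
`1 ≤ Σᵢ ∂F/∂κᵢ(κ) ≤ k`. -/
theorem stmt_14 (n k : ℕ) (hn : 1 ≤ n) (hk1 : 1 ≤ k) (hkn : k ≤ n)
    (F : (Fin n → ℝ) → ℝ) (hF : F = fun κ => Hsym n k κ / Hsym n (k - 1) κ) :
    ∀ κ : Fin n → ℝ, (∀ i, 0 < κ i) →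
      DifferentiableAt ℝ F κ ∧
      1 ≤ ∑ i : Fin n, fderiv ℝ F κ (Pi.single i 1) ∧
      ∑ i : Fin n, fderiv ℝ F κ (Pi.single i 1) ≤ (k : ℝ) := by
  subst hF
  intro κ hκ
  have hk1n : k - 1 ≤ n := le_trans (Nat.sub_le k 1) hkn
  have hA : 0 < Hsym n (k-1) κ := Hsym_pos hk1n hκ
  have hB : 0 < Hsym n k κ := Hsym_pos hkn hκ
  have hC2 : 0 < Hsym n (k-1-1) κ := Hsym_pos (le_trans (Nat.sub_le _ 1) hk1n) hκ
  have hDk := hasFDerivAt_Hsym n k κ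
  have hDk1 := hasFDerivAt_Hsym n (k-1) κ
  have hinv : HasFDerivAt (fun x : Fin n → ℝ => (Hsym n (k-1) x)⁻¹)
      ((-(ContinuousLinearMap.mulLeftRight ℝ ℝ (Hsym n (k-1) κ)⁻¹ (Hsym n (k-1) κ)⁻¹)).comp
        (((n.choose (k-1) : ℝ))⁻¹ • ∑ s ∈ Finset.powersetCard (k-1) (Finset.univ : Finset (Fin n)),
          ∑ i ∈ s, (∏ l ∈ s.erase i, κ l) • (ContinuousLinearMap.proj i : (Fin n → ℝ) →L[ℝ] ℝ))) κ :=
    (hasFDerivAt_inv' hA.ne').comp κ hDk1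
  have hmul := hDk.fun_mul hinv
  have hdiv : HasFDerivAt (fun x : Fin n → ℝ => Hsym n k x / Hsym n (k-1) x)
      (Hsym n k κ •
        ((-(ContinuousLinearMap.mulLeftRight ℝ ℝ (Hsym n (k-1) κ)⁻¹ (Hsym n (k-1) κ)⁻¹)).comp
        (((n.choose (k-1) : ℝ))⁻¹ • ∑ s ∈ Finset.powersetCard (k-1) (Finset.univ : Finset (Fin n)),
          ∑ i ∈ s, (∏ l ∈ s.erase i, κ l) • (ContinuousLinearMap.proj i : (Fin n → ℝ) →L[ℝ] ℝ)))
        + (Hsym n (k-1) κ)⁻¹ •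
        (((n.choose k : ℝ))⁻¹ • ∑ s ∈ Finset.powersetCard k (Finset.univ : Finset (Fin n)),
          ∑ i ∈ s, (∏ l ∈ s.erase i, κ l) • (ContinuousLinearMap.proj i : (Fin n → ℝ) →L[ℝ] ℝ))) κ := by
    simpa [div_eq_mul_inv] using hmul
  refine ⟨hdiv.differentiableAt, ?_⟩
  set G := fun κ : Fin n → ℝ => Hsym n k κ / Hsym n (k - 1) κ with hG
  have hone : (∑ i : Fin n, Pi.single i (1:ℝ)) = (fun _ : Fin n => (1:ℝ)) := by
    ext x
    simp [Finset.sum_apply, Pi.single_apply]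
  have hsum : ∑ i : Fin n, fderiv ℝ G κ (Pi.single i 1) = fderiv ℝ G κ (fun _ => 1) := by
    rw [← map_sum, hone]
  have hfd := hdiv.fderiv
  have hval : fderiv ℝ G κ (fun _ => (1:ℝ))
      = Hsym n k κ * (-((Hsym n (k-1) κ)⁻¹ * (((k-1:ℕ):ℝ) * Hsym n (k-1-1) κ) * (Hsym n (k-1) κ)⁻¹))
        + (Hsym n (k-1) κ)⁻¹ * ((k:ℝ) * Hsym n (k-1) κ) := by
    rw [hfd]
    rw [ContinuousLinearMap.add_apply, ContinuousLinearMap.smul_apply,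
      ContinuousLinearMap.smul_apply, ContinuousLinearMap.comp_apply,
      Hsym_deriv_one n k hkn κ, ContinuousLinearMap.neg_apply,
      ContinuousLinearMap.mulLeftRight_apply]
    rw [Hsym_deriv_one n (k-1) hk1n κ, smul_eq_mul, smul_eq_mul]
  have hcast : ((k-1:ℕ):ℝ) = (k:ℝ) - 1 := by
    rw [Nat.cast_sub hk1, Nat.cast_one]
  have hval2 : fderiv ℝ G κ (fun _ => (1:ℝ))
      = (k:ℝ) - ((k:ℝ)-1) * (Hsym n k κ * Hsym n (k-1-1) κ) / (Hsym n (k-1) κ)^2 := by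
    rw [hval, hcast]
    field_simp
    ring
  rw [hsum, hval2]
  have hk1' : (1:ℝ) ≤ (k:ℝ) := by exact_mod_cast hk1
  have hN : ((k:ℝ)-1) * (Hsym n k κ * Hsym n (k-1-1) κ)
      ≤ ((k:ℝ)-1) * (Hsym n (k-1) κ)^2 := by
    rcases Nat.lt_or_ge k 2 with hk2 | hk2
    · interval_cases k
      simp
    · have hj : 1 ≤ k - 1 := by omega
      have := Hsym_newton (n := n) hj hκ
      have h2 : k - 1 + 1 = k := by omega
      rw [h2] at this
      have hc : (0:ℝ) ≤ (k:ℝ) - 1 := by linarith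
      calc ((k:ℝ)-1) * (Hsym n k κ * Hsym n (k-1-1) κ)
          = ((k:ℝ)-1) * (Hsym n (k-1-1) κ * Hsym n k κ) := by ring
        _ ≤ ((k:ℝ)-1) * (Hsym n (k-1) κ)^2 := mul_le_mul_of_nonneg_left this hc
  constructor
  · have hdivle : ((k:ℝ)-1) * (Hsym n k κ * Hsym n (k-1-1) κ) / (Hsym n (k-1) κ)^2
        ≤ (k:ℝ) - 1 := by
      rw [div_le_iff₀ (by positivity)]
      nlinarith [hN]
    linarith
  · have : 0 ≤ ((k:ℝ)-1) * (Hsym n k κ * Hsym n (k-1-1) κ) / (Hsym n (k-1) κ)^2 := by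
      apply div_nonneg _ (by positivity)
      apply mul_nonneg (by linarith) (by positivity)
    linarith
end

section
/- For n ≥ 1, 1 ≤ k ≤ n, let F(κ) = H_k(κ)/H_{k−1}(κ). Then for every κ in the positive cone (0, ∞)ⁿ one has F(κ)² ≤ Σ_{i=1}^{n} (∂F/∂κ_i)(κ)·κ_i² ≤ (n − k + 1)·F(κ)². -/
namespace Stmt15
open Finset

variable {ι : Type*}

noncomputable def esym (f : ι → ℝ) (s : Finset ι) (j : ℕ) : ℝ :=
  ∑ t ∈ s.powersetCard j, ∏ i ∈ t, f i

lemma esym_zero (f : ι → ℝ) (s : Finset ι) : esym f s 0 = 1 := by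
  simp [esym]

lemma esym_one (f : ι → ℝ) (s : Finset ι) : esym f s 1 = ∑ i ∈ s, f i := by
  simp [esym, powersetCard_one]

lemma esym_self (f : ι → ℝ) (s : Finset ι) : esym f s s.card = ∏ i ∈ s, f i := by
  simp [esym, powersetCard_self]

lemma esym_of_lt (f : ι → ℝ) {s : Finset ι} {j : ℕ} (h : s.card < j) : esym f s j = 0 := by
  simp [esym, powersetCard_eq_empty.2 h]

lemma esym_nonneg {f : ι → ℝ} {s : Finset ι} (hf : ∀ i ∈ s, 0 ≤ f i) (j : ℕ) :
    0 ≤ esym f s j :=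
  sum_nonneg fun t ht => prod_nonneg fun i hi => hf i ((mem_powersetCard.1 ht).1 hi)

lemma esym_pos {f : ι → ℝ} {s : Finset ι} (hf : ∀ i ∈ s, 0 < f i) {j : ℕ} (hj : j ≤ s.card) :
    0 < esym f s j :=
  sum_pos (fun t ht => prod_pos fun i hi => hf i ((mem_powersetCard.1 ht).1 hi))
    (powersetCard_nonempty.2 hj)

variable [DecidableEq ι]

lemma esym_insert (f : ι → ℝ) {a : ι} {s : Finset ι} (h : a ∉ s) (j : ℕ) :
    esym f (insert a s) (j+1) = esym f s (j+1) + f a * esym f s j := by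
  have hdisj : Disjoint (s.powersetCard (j+1)) ((s.powersetCard j).image (insert a)) := by
    rw [disjoint_left]
    rintro t ht htim
    obtain ⟨u, hu, rfl⟩ := mem_image.1 htim
    exact h ((mem_powersetCard.1 ht).1 (mem_insert_self a u))
  have hinj : ∀ t1 ∈ s.powersetCard j, ∀ t2 ∈ s.powersetCard j,
      insert a t1 = insert a t2 → t1 = t2 := by
    intro t1 h1 t2 h2 he
    have ha1 : a ∉ t1 := fun hh => h ((mem_powersetCard.1 h1).1 hh)
    have ha2 : a ∉ t2 := fun hh => h ((mem_powersetCard.1 h2).1 hh)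
    rw [← erase_insert ha1, he, erase_insert ha2]
  rw [esym, powersetCard_succ_insert h, sum_union hdisj, sum_image hinj]
  rw [esym, esym, mul_sum]
  congr 1
  refine sum_congr rfl fun t ht => ?_
  rw [prod_insert fun hat => h ((mem_powersetCard.1 ht).1 hat)]

lemma esym_compl (f : ι → ℝ) {s : Finset ι} {j : ℕ} (hj : j ≤ s.card) :
    esym f s j = ∑ u ∈ s.powersetCard (s.card - j), ∏ i ∈ s \ u, f i := by
  refine sum_nbij' (fun t => s \ t) (fun u => s \ u) ?_ ?_ ?_ ?_ ?_
  · intro t ht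
    obtain ⟨hts, htc⟩ := mem_powersetCard.1 ht
    exact mem_powersetCard.2 ⟨sdiff_subset, by rw [card_sdiff_of_subset hts, htc]⟩
  · intro u hu
    obtain ⟨hus, huc⟩ := mem_powersetCard.1 hu
    exact mem_powersetCard.2 ⟨sdiff_subset, by rw [card_sdiff_of_subset hus, huc, Nat.sub_sub_self hj]⟩
  · intro t ht
    show s \ (s \ t) = t
    rw [sdiff_sdiff_self_left, inter_eq_right.2 (mem_powersetCard.1 ht).1]
  · intro u hu
    show s \ (s \ u) = u
    rw [sdiff_sdiff_self_left, inter_eq_right.2 (mem_powersetCard.1 hu).1]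
  · intro t ht
    show ∏ i ∈ t, f i = ∏ i ∈ s \ (s \ t), f i
    rw [sdiff_sdiff_self_left, inter_eq_right.2 (mem_powersetCard.1 ht).1]

lemma sq_sum_eq (y : ι → ℝ) (s : Finset ι) :
    (∑ i ∈ s, y i)^2 = ∑ i ∈ s, (y i)^2 + 2 * esym y s 2 := by
  induction s using Finset.induction_on with
  | empty => simp [esym_of_lt y (s := ∅) (j := 2) (by simp)]
  | insert a s h ih =>
      have h2 : esym y (insert a s) 2 = esym y s 2 + y a * esym y s 1 := esym_insert y h 1
      rw [sum_insert h, sum_insert h, h2, esym_one]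
      nlinarith [ih]

end Stmt15

namespace Stmt15
open Finset

variable {ι : Type*} [DecidableEq ι]

lemma newton_top (f : ι → ℝ) (s : Finset ι) (hm : 2 ≤ s.card) :
    2 * (s.card : ℝ) * (esym f s (s.card - 2) * esym f s s.card)
      ≤ ((s.card : ℝ) - 1) * (esym f s (s.card - 1))^2 := by
  set y : ι → ℝ := fun i => ∏ l ∈ s.erase i, f l with hy
  have h1 : esym f s (s.card - 1) = ∑ i ∈ s, y i := by
    rw [esym_compl f (Nat.sub_le _ _), show s.card - (s.card - 1) = 1 by omega,
      powersetCard_one, sum_map]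
    refine sum_congr rfl fun i _ => ?_
    simp only [Function.Embedding.coeFn_mk, hy, erase_eq]
  have h2 : esym f s (s.card - 2) * esym f s s.card = esym y s 2 := by
    rw [esym_compl f (Nat.sub_le _ _), show s.card - (s.card - 2) = 2 by omega, esym_self,
      sum_mul]
    refine sum_congr rfl fun u hu => ?_
    obtain ⟨hus, huc⟩ := mem_powersetCard.1 hu
    obtain ⟨i, j, hij, rfl⟩ := card_eq_two.1 huc
    have hi : i ∈ s := hus (by simp)
    have hj : j ∈ s := hus (by simp)
    have hsd : s \ {i, j} = (s.erase i).erase j := by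
      ext x; simp only [mem_sdiff, mem_erase, mem_insert, mem_singleton]; tauto
    have e1 : ∏ l ∈ s, f l = f i * ∏ l ∈ s.erase i, f l := (mul_prod_erase s f hi).symm
    have e2 : ∏ l ∈ s.erase i, f l = f j * ∏ l ∈ (s.erase i).erase j, f l :=
      (mul_prod_erase _ f (mem_erase.2 ⟨fun hji => hij hji.symm, hj⟩)).symm
    have e3 : ∏ l ∈ s.erase j, f l = f i * ∏ l ∈ (s.erase i).erase j, f l := by
      have h' : (s.erase j).erase i = (s.erase i).erase j := by
        ext x; simp only [mem_erase]; tauto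
      rw [← h']
      exact (mul_prod_erase _ f (mem_erase.2 ⟨hij, hi⟩)).symm
    rw [prod_pair hij, hsd]
    simp only [hy]
    rw [e1, e2, e3]
    ring
  have h3 := sq_sum_eq y s
  have h4 : (∑ i ∈ s, y i)^2 ≤ (s.card : ℝ) * ∑ i ∈ s, (y i)^2 :=
    sq_sum_le_card_mul_sum_sq (s := s) (f := y)
  have h3m := congrArg (fun z => (s.card : ℝ) * z) h3
  rw [h2, h1]
  nlinarith [h3, h3m, h4]

lemma quad {p q t A0 A1 A2 A3 : ℝ} (hp : 1 ≤ p) (hq : 1 ≤ q) (ht : 0 ≤ t)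
    (h1 : (p+1)*q*(A1*A3) ≤ p*(q-1)*A2^2)
    (h2 : p*(q+1)*(A0*A2) ≤ (p-1)*q*A1^2)
    (h3 : (p+1)*(q+1)*(A0*A3) ≤ (p-1)*(q-1)*(A1*A2)) :
    (p+1)*(q+1)*((A1+t*A0)*(A3+t*A2)) ≤ p*q*(A2+t*A1)^2 := by
  have hpq : 0 < p * q := by nlinarith
  have key : p*q*(p*q*(A2+t*A1)^2 - (p+1)*(q+1)*((A1+t*A0)*(A3+t*A2)))
      = p*(q+1)*(p*(q-1)*A2^2 - (p+1)*q*(A1*A3))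
        + p*q*t*((p-1)*(q-1)*(A1*A2) - (p+1)*(q+1)*(A0*A3))
        + q*(p+1)*t^2*((p-1)*q*A1^2 - p*(q+1)*(A0*A2))
        + (p*A2 - q*t*A1)^2 := by ring
  nlinarith [mul_nonneg (mul_nonneg (by nlinarith : (0:ℝ) ≤ p*q) ht) (sub_nonneg.2 h3),
    mul_nonneg (mul_nonneg (by nlinarith : (0:ℝ) ≤ q*(p+1)) (sq_nonneg t)) (sub_nonneg.2 h2),
    mul_nonneg (by nlinarith : (0:ℝ) ≤ p*(q+1)) (sub_nonneg.2 h1),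
    sq_nonneg (p*A2 - q*t*A1)]

end Stmt15

namespace Stmt15
open Finset
set_option maxHeartbeats 1000000

variable {ι : Type*} [DecidableEq ι]

theorem esym_newton (f : ι → ℝ) (s : Finset ι) :
    (∀ i ∈ s, 0 < f i) → ∀ k : ℕ, 1 ≤ k →
      ((k:ℝ)+1) * ((s.card:ℝ) - k + 1) * (esym f s (k-1) * esym f s (k+1))
        ≤ (k:ℝ) * ((s.card:ℝ) - k) * (esym f s k)^2 := by
  induction s using Finset.induction_on with
  | empty =>
      intro _ k hk
      have h1 : esym f (∅ : Finset ι) (k+1) = 0 := esym_of_lt f (by simp only [card_empty]; omega)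
      have h2 : esym f (∅ : Finset ι) k = 0 := esym_of_lt f (by simp only [card_empty]; omega)
      simp [h1, h2]
  | insert a s' ha ih =>
      intro hf k hk
      have hf' : ∀ i ∈ s', 0 < f i := fun i hi => hf i (mem_insert_of_mem hi)
      have hfa : 0 < f a := hf a (mem_insert_self a s')
      have hcard : (insert a s').card = s'.card + 1 := card_insert_of_notMem ha
      rcases le_or_gt (s'.card + 1) k with hbig | hlt
      · -- trivial: k ≥ card (insert a s')
        have h1 : esym f (insert a s') (k+1) = 0 := esym_of_lt f (by rw [hcard]; omega)
        rcases eq_or_lt_of_le hbig with heq | hgt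
        · rw [hcard, h1, ← heq]
          push_cast
          simp
        · have h2 : esym f (insert a s') k = 0 := esym_of_lt f (by rw [hcard]; omega)
          rw [h1, h2]
          simp
      · rcases eq_or_lt_of_le (show k ≤ s'.card by omega) with hkm | hklt
        · -- base : k = card s'
          have hc2 : (insert a s').card = k + 1 := by rw [hcard]; omega
          have hnt := newton_top f (insert a s') (by omega)
          rw [hc2] at hnt
          rw [show k + 1 - 2 = k - 1 by omega, show k + 1 - 1 = k by omega] at hnt
          rw [hc2]
          push_cast at hnt ⊢
          nlinarith [hnt]
        · -- main: 1 ≤ k ≤ card s' - 1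
          have hkm' : k + 1 ≤ s'.card := by omega
          obtain ⟨p, rfl⟩ : ∃ p, k = p + 1 := ⟨k - 1, by omega⟩
          have ht : (0:ℝ) ≤ f a := le_of_lt hfa
          rcases p with _ | r
          · -- k = 1
            have IH1 := ih hf' 1 le_rfl
            rw [show (1:ℕ) - 1 = 0 from rfl, esym_zero] at IH1
            have hq : (1:ℝ) ≤ (s'.card : ℝ) - 1 + 1 - 1 := by
              have : (2:ℝ) ≤ (s'.card : ℝ) := by exact_mod_cast hkm'
              linarith
            have hquad := quad (p := 1) (q := (s'.card : ℝ) - 1 + 1 - 1 + 1) (t := f a)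
              (A0 := 0) (A1 := 1) (A2 := esym f s' 1) (A3 := esym f s' 2)
              le_rfl (by linarith) ht (by push_cast at IH1 ⊢; nlinarith [IH1])
              (by norm_num) (by norm_num)
            have hE2 : esym f (insert a s') 2 = esym f s' 2 + f a * esym f s' 1 :=
              esym_insert f ha 1
            have hE1 : esym f (insert a s') 1 = esym f s' 1 + f a * esym f s' 0 :=
              esym_insert f ha 0
            rw [show (0:ℕ)+1 = 1 from rfl, show (0:ℕ)+1+1 = 2 from rfl,
              show (1:ℕ) - 1 = 0 from rfl, esym_zero, hE2, hE1, esym_zero, hcard]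
            push_cast
            nlinarith [hquad]
          · -- k = r + 2
            set A0 := esym f s' r with hA0
            set A1 := esym f s' (r+1) with hA1
            set A2 := esym f s' (r+2) with hA2
            set A3 := esym f s' (r+3) with hA3
            have hkk : r + 1 + 1 = r + 2 := rfl
            rw [hkk] at hkm' hlt ⊢
            have hm3 : r + 3 ≤ s'.card := by omega
            have IHk := ih hf' (r+2) (by omega)
            rw [show r+2-1 = r+1 by omega, show r+2+1 = r+3 by omega] at IHk
            have IHk1 := ih hf' (r+1) (by omega)
            rw [show r+1-1 = r by omega, show r+1+1 = r+2 by omega] at IHk1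
            set q : ℝ := (s'.card : ℝ) - (r+2) + 1 with hqdef
            set pp : ℝ := (r:ℝ) + 2 with hpdef
            have hq : 1 ≤ q := by
              have : ((r:ℝ) + 3) ≤ (s'.card : ℝ) := by exact_mod_cast hm3
              rw [hqdef]; linarith
            have hp : 1 ≤ pp := by rw [hpdef]; have : (0:ℝ) ≤ (r:ℝ) := Nat.cast_nonneg r; linarith
            have hA1pos : 0 < A1 := esym_pos hf' (by omega)
            have hA2pos : 0 < A2 := esym_pos hf' (by omega)
            have hA0nn : 0 ≤ A0 := esym_nonneg (fun i hi => le_of_lt (hf' i hi)) r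
            have hA3nn : 0 ≤ A3 := esym_nonneg (fun i hi => le_of_lt (hf' i hi)) (r+3)
            have h1 : (pp+1)*q*(A1*A3) ≤ pp*(q-1)*A2^2 := by
              push_cast at IHk
              rw [hqdef, hpdef]; nlinarith [IHk]
            have h2 : pp*(q+1)*(A0*A2) ≤ (pp-1)*q*A1^2 := by
              push_cast at IHk1
              rw [hqdef, hpdef]; nlinarith [IHk1]
            have h3 : (pp+1)*(q+1)*(A0*A3) ≤ (pp-1)*(q-1)*(A1*A2) := by
              have hb : (0:ℝ) ≤ pp*(q-1)*A2^2 := by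
                have : (0:ℝ) ≤ q - 1 := by linarith
                positivity
              have hc : (0:ℝ) ≤ pp*(q+1)*(A0*A2) := by positivity
              have hmul := mul_le_mul h1 h2 hc hb
              nlinarith [hmul, mul_pos hA1pos hA2pos,
                mul_pos (mul_pos (show (0:ℝ) < pp by linarith) (show (0:ℝ) < q by linarith))
                  (mul_pos hA1pos hA2pos)]
            have hquad := quad hp hq ht h1 h2 h3
            have hE3 : esym f (insert a s') (r+3) = A3 + f a * A2 := esym_insert f ha (r+2)
            have hE2 : esym f (insert a s') (r+2) = A2 + f a * A1 := esym_insert f ha (r+1)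
            have hE1 : esym f (insert a s') (r+1) = A1 + f a * A0 := esym_insert f ha r
            rw [show r+2-1 = r+1 by omega, show r+2+1 = r+3 by omega, hE3, hE2, hE1, hcard]
            rw [hqdef, hpdef] at hquad
            push_cast at hquad ⊢
            nlinarith [hquad]

end Stmt15

namespace Stmt15
open Finset ContinuousLinearMap
set_option maxHeartbeats 1000000

variable {n : ℕ}

noncomputable def Dmap (κ : Fin n → ℝ) (j : ℕ) : (Fin n → ℝ) →L[ℝ] ℝ :=
  ∑ s ∈ powersetCard j (univ : Finset (Fin n)), ∑ i ∈ s,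
    (∏ l ∈ s.erase i, κ l) • (ContinuousLinearMap.proj i : (Fin n → ℝ) →L[ℝ] ℝ)

lemma hasFDerivAt_esymU (j : ℕ) (κ : Fin n → ℝ) :
    HasFDerivAt (fun x : Fin n → ℝ => esym x Finset.univ j) (Dmap κ j) κ := by
  apply HasFDerivAt.fun_sum
  intro s _
  exact HasFDerivAt.finset_prod (fun i _ => hasFDerivAt_apply i κ)

noncomputable def Pd (κ : Fin n → ℝ) (j : ℕ) (i : Fin n) : ℝ :=
  ∑ s ∈ powersetCard j (univ : Finset (Fin n)), if i ∈ s then ∏ l ∈ s.erase i, κ l else 0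

lemma Dmap_apply_single (κ : Fin n → ℝ) (j : ℕ) (i : Fin n) :
    Dmap κ j (Pi.single i 1) = Pd κ j i := by
  rw [Dmap, Pd, ContinuousLinearMap.sum_apply]
  refine sum_congr rfl fun s _ => ?_
  rw [ContinuousLinearMap.sum_apply]
  simp only [ContinuousLinearMap.smul_apply, ContinuousLinearMap.proj_apply, smul_eq_mul,
    Pi.single_apply, mul_ite, mul_one, mul_zero]
  exact sum_ite_eq' s i (fun l => ∏ m ∈ s.erase l, κ m)

lemma key_sum (j : ℕ) (κ : Fin n → ℝ) :
    ∑ i : Fin n, Pd κ j i * κ i ^ 2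
      = esym κ univ 1 * esym κ univ j - ((j:ℝ)+1) * esym κ univ (j+1) := by
  classical
  have step1 : ∑ i : Fin n, Pd κ j i * κ i ^ 2
      = ∑ s ∈ powersetCard j (univ : Finset (Fin n)), ∑ i ∈ s, κ i * ∏ l ∈ s, κ l := by
    calc ∑ i : Fin n, Pd κ j i * κ i ^ 2
        = ∑ i : Fin n, ∑ s ∈ powersetCard j (univ : Finset (Fin n)),
            (if i ∈ s then (∏ l ∈ s.erase i, κ l) * κ i ^ 2 else 0) := by
          refine sum_congr rfl fun i _ => ?_
          rw [Pd, sum_mul]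
          exact sum_congr rfl fun s _ => by rw [ite_mul, zero_mul]
      _ = ∑ s ∈ powersetCard j (univ : Finset (Fin n)), ∑ i : Fin n,
            (if i ∈ s then (∏ l ∈ s.erase i, κ l) * κ i ^ 2 else 0) := sum_comm
      _ = ∑ s ∈ powersetCard j (univ : Finset (Fin n)), ∑ i ∈ s,
            (∏ l ∈ s.erase i, κ l) * κ i ^ 2 := by
          refine sum_congr rfl fun s _ => ?_
          rw [sum_ite_mem, univ_inter]
      _ = ∑ s ∈ powersetCard j (univ : Finset (Fin n)), ∑ i ∈ s, κ i * ∏ l ∈ s, κ l := by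
          refine sum_congr rfl fun s _ => sum_congr rfl fun i hi => ?_
          rw [← mul_prod_erase s κ hi]
          ring
  have L8 : ∑ s ∈ powersetCard j (univ : Finset (Fin n)), ∑ i ∈ sᶜ, κ i * ∏ l ∈ s, κ l
      = ((j:ℝ)+1) * esym κ univ (j+1) := by
    have e1 : ∑ s ∈ powersetCard j (univ : Finset (Fin n)), ∑ i ∈ sᶜ, κ i * ∏ l ∈ s, κ l
        = ∑ x ∈ (powersetCard j (univ : Finset (Fin n))).sigma (fun s => sᶜ),
            κ x.2 * ∏ l ∈ x.1, κ l := by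
      rw [sum_sigma]
    have e2 : ∑ t ∈ powersetCard (j+1) (univ : Finset (Fin n)), ∑ i ∈ t, ∏ l ∈ t, κ l
        = ∑ x ∈ (powersetCard (j+1) (univ : Finset (Fin n))).sigma (fun t => t),
            ∏ l ∈ x.1, κ l := by
      rw [sum_sigma]
    have e3 : ∑ x ∈ (powersetCard j (univ : Finset (Fin n))).sigma (fun s => sᶜ),
        κ x.2 * ∏ l ∈ x.1, κ l
        = ∑ x ∈ (powersetCard (j+1) (univ : Finset (Fin n))).sigma (fun t => t),
            ∏ l ∈ x.1, κ l := by
      refine sum_nbij' (fun x => ⟨insert x.2 x.1, x.2⟩) (fun y => ⟨y.1.erase y.2, y.2⟩)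
        ?_ ?_ ?_ ?_ ?_
      · rintro ⟨s, i⟩ hx
        rw [mem_sigma] at hx ⊢
        obtain ⟨hs, hi⟩ := hx
        have hnot : i ∉ s := mem_compl.1 hi
        obtain ⟨_, hcard⟩ := mem_powersetCard.1 hs
        exact ⟨mem_powersetCard.2 ⟨subset_univ _, by rw [card_insert_of_notMem hnot, hcard]⟩,
          mem_insert_self _ _⟩
      · rintro ⟨t, i⟩ hy
        rw [mem_sigma] at hy ⊢
        obtain ⟨ht, hi⟩ := hy
        obtain ⟨_, hcard⟩ := mem_powersetCard.1 ht
        exact ⟨mem_powersetCard.2 ⟨subset_univ _, by rw [card_erase_of_mem hi, hcard]; omega⟩,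
          mem_compl.2 (notMem_erase _ _)⟩
      · rintro ⟨s, i⟩ hx
        rw [mem_sigma] at hx
        have hnot : i ∉ s := mem_compl.1 hx.2
        exact Sigma.ext (erase_insert hnot) HEq.rfl
      · rintro ⟨t, i⟩ hy
        rw [mem_sigma] at hy
        exact Sigma.ext (insert_erase hy.2) HEq.rfl
      · rintro ⟨s, i⟩ hx
        rw [mem_sigma] at hx
        have hnot : i ∉ s := mem_compl.1 hx.2
        exact (prod_insert hnot).symm
    have e4 : ∑ t ∈ powersetCard (j+1) (univ : Finset (Fin n)), ∑ i ∈ t, ∏ l ∈ t, κ l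
        = ((j:ℝ)+1) * esym κ univ (j+1) := by
      rw [esym, mul_sum]
      refine sum_congr rfl fun t ht => ?_
      obtain ⟨_, hcard⟩ := mem_powersetCard.1 ht
      rw [sum_const, hcard, nsmul_eq_mul]
      push_cast
      ring
    rw [e1, e3, ← e2, e4]
  have split : ∀ s ∈ powersetCard j (univ : Finset (Fin n)),
      (∑ i ∈ s, κ i * ∏ l ∈ s, κ l)
        = (∑ i : Fin n, κ i) * ∏ l ∈ s, κ l - ∑ i ∈ sᶜ, κ i * ∏ l ∈ s, κ l := by
    intro s _
    rw [sum_mul, ← sum_add_sum_compl s (fun i => κ i * ∏ l ∈ s, κ l)]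
    ring
  rw [step1, sum_congr rfl split, sum_sub_distrib, L8, ← mul_sum, ← esym_one κ univ]
  rfl

end Stmt15

set_option maxHeartbeats 1600000 in
open Finset Stmt15 ContinuousLinearMap in
/-- For `1 ≤ k ≤ n` and `F = H_k / H_{k-1}`, at every `κ` in the
positive cone one has `F(κ)² ≤ Σᵢ ∂F/∂κᵢ(κ)·κᵢ² ≤ (n - k + 1)·F(κ)²`. -/
theorem stmt_15 (n k : ℕ) (hn : 1 ≤ n) (hk1 : 1 ≤ k) (hkn : k ≤ n)
    (F : (Fin n → ℝ) → ℝ) (hF : F = fun κ => Hsym n k κ / Hsym n (k - 1) κ) :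
    ∀ κ : Fin n → ℝ, (∀ i, 0 < κ i) →
      DifferentiableAt ℝ F κ ∧
      F κ ^ 2 ≤ ∑ i : Fin n, fderiv ℝ F κ (Pi.single i 1) * (κ i) ^ 2 ∧
      ∑ i : Fin n, fderiv ℝ F κ (Pi.single i 1) * (κ i) ^ 2 ≤ ((n : ℝ) - k + 1) * F κ ^ 2 := by
  subst hF
  intro κ hκ
  classical
  have hcardU : (Finset.univ : Finset (Fin n)).card = n := by simp
  have hκu : ∀ i ∈ (Finset.univ : Finset (Fin n)), 0 < κ i := fun i _ => hκ i
  have hkn1 : k - 1 ≤ n := le_trans (Nat.sub_le k 1) hkn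
  set K : ℝ := (k : ℝ) with hK
  have hck : (0:ℝ) < (n.choose k : ℝ) := by exact_mod_cast Nat.choose_pos hkn
  have hck1 : (0:ℝ) < (n.choose (k-1) : ℝ) := by exact_mod_cast Nat.choose_pos hkn1
  have hek1 : 0 < esym κ Finset.univ (k-1) := esym_pos hκu (by rw [hcardU]; omega)
  have hek : 0 < esym κ Finset.univ k := esym_pos hκu (by rw [hcardU]; omega)
  have heknn : 0 ≤ esym κ Finset.univ (k+1) := esym_nonneg (fun i _ => (hκ i).le) _
  have hHdef : ∀ j, Hsym n j κ = (n.choose j : ℝ)⁻¹ * esym κ Finset.univ j := fun j => rfl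
  have hH1pos : 0 < Hsym n (k-1) κ := by rw [hHdef]; positivity
  have hne : Hsym n (k-1) κ ≠ 0 := ne_of_gt hH1pos
  have hDk : HasFDerivAt (Hsym n k) ((n.choose k : ℝ)⁻¹ • Dmap κ k) κ :=
    (hasFDerivAt_esymU k κ).const_mul _
  have hDk1 : HasFDerivAt (Hsym n (k-1)) ((n.choose (k-1) : ℝ)⁻¹ • Dmap κ (k-1)) κ :=
    (hasFDerivAt_esymU (k-1) κ).const_mul _
  have hinv : HasFDerivAt (fun x => (Hsym n (k-1) x)⁻¹)
      ((ContinuousLinearMap.smulRight (1 : ℝ →L[ℝ] ℝ) (-(Hsym n (k-1) κ ^ 2)⁻¹)).comp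
        ((n.choose (k-1) : ℝ)⁻¹ • Dmap κ (k-1))) κ :=
    (hasFDerivAt_inv hne).comp κ hDk1
  have hFder : HasFDerivAt (fun κ => Hsym n k κ / Hsym n (k-1) κ)
      (Hsym n k κ • ((ContinuousLinearMap.smulRight (1 : ℝ →L[ℝ] ℝ)
          (-(Hsym n (k-1) κ ^ 2)⁻¹)).comp ((n.choose (k-1) : ℝ)⁻¹ • Dmap κ (k-1)))
        + (Hsym n (k-1) κ)⁻¹ • ((n.choose k : ℝ)⁻¹ • Dmap κ k)) κ := by
    simp only [div_eq_mul_inv]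
    exact hDk.mul hinv
  have heval : ∀ i, fderiv ℝ (fun κ => Hsym n k κ / Hsym n (k-1) κ) κ (Pi.single i 1)
      = Hsym n k κ * (((n.choose (k-1) : ℝ)⁻¹ * Pd κ (k-1) i) * (-(Hsym n (k-1) κ ^ 2)⁻¹))
        + (Hsym n (k-1) κ)⁻¹ * ((n.choose k : ℝ)⁻¹ * Pd κ k i) := by
    intro i
    rw [hFder.fderiv]
    simp only [ContinuousLinearMap.add_apply, ContinuousLinearMap.smul_apply,
      ContinuousLinearMap.comp_apply, ContinuousLinearMap.smulRight_apply,
      ContinuousLinearMap.one_apply, smul_eq_mul, Dmap_apply_single]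
  have hsum : ∑ i : Fin n, fderiv ℝ (fun κ => Hsym n k κ / Hsym n (k-1) κ) κ (Pi.single i 1)
        * κ i ^ 2
      = (n.choose (k-1) : ℝ) * (K * esym κ Finset.univ k ^ 2
          - (K+1) * (esym κ Finset.univ (k-1) * esym κ Finset.univ (k+1)))
        / ((n.choose k : ℝ) * esym κ Finset.univ (k-1) ^ 2) := by
    have h1 : ∀ i : Fin n, fderiv ℝ (fun κ => Hsym n k κ / Hsym n (k-1) κ) κ (Pi.single i 1)
          * κ i ^ 2
        = (Hsym n k κ * (-(Hsym n (k-1) κ ^ 2)⁻¹) * (n.choose (k-1) : ℝ)⁻¹)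
            * (Pd κ (k-1) i * κ i ^ 2)
          + ((Hsym n (k-1) κ)⁻¹ * (n.choose k : ℝ)⁻¹) * (Pd κ k i * κ i ^ 2) := by
      intro i; rw [heval i]; ring
    rw [sum_congr rfl fun i _ => h1 i, sum_add_distrib, ← mul_sum, ← mul_sum,
      key_sum k κ, key_sum (k-1) κ, show k - 1 + 1 = k from by omega]
    have hc : ((k-1 : ℕ) : ℝ) = K - 1 := by rw [Nat.cast_sub hk1]; simp [hK]
    rw [hc, hHdef, hHdef]
    field_simp
    ring
  have hNewtonU : (K+1)*((n:ℝ)-K+1)*(esym κ Finset.univ (k-1) * esym κ Finset.univ (k+1))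
      ≤ K*((n:ℝ)-K)*(esym κ Finset.univ k)^2 := by
    have h := esym_newton κ Finset.univ (fun i _ => hκ i) k hk1
    rwa [hcardU] at h
  have hckid : K * (n.choose k : ℝ) = ((n:ℝ) - K + 1) * (n.choose (k-1) : ℝ) := by
    have h0 : k - 1 + 1 = k := by omega
    have h1 := Nat.choose_succ_right_eq n (k-1)
    rw [h0] at h1
    have h2 := congrArg (fun z : ℕ => (z:ℝ)) h1
    push_cast [Nat.cast_sub hkn1, Nat.cast_sub hk1] at h2
    linear_combination h2
  have hq : (0:ℝ) < (n:ℝ) - K + 1 := by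
    have : K ≤ (n:ℝ) := by rw [hK]; exact_mod_cast hkn
    linarith
  have hFval : (fun κ => Hsym n k κ / Hsym n (k-1) κ) κ
      = ((n.choose (k-1) : ℝ) * esym κ Finset.univ k)
        / ((n.choose k : ℝ) * esym κ Finset.univ (k-1)) := by
    show Hsym n k κ / Hsym n (k-1) κ = _
    rw [hHdef, hHdef]
    field_simp
  refine ⟨hFder.differentiableAt, ?_, ?_⟩
  · have core : (n.choose (k-1):ℝ) * esym κ Finset.univ k ^ 2
        ≤ (n.choose k : ℝ) * (K * esym κ Finset.univ k ^ 2
            - (K+1)*(esym κ Finset.univ (k-1) * esym κ Finset.univ (k+1))) := by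
      rw [← mul_le_mul_iff_right₀ hq]
      have h1 := mul_le_mul_of_nonneg_left hNewtonU hck.le
      have hce : K*(n.choose k:ℝ)*esym κ Finset.univ k^2
          = ((n:ℝ)-K+1)*(n.choose (k-1):ℝ)*esym κ Finset.univ k^2 := by
        linear_combination esym κ Finset.univ k ^ 2 * hckid
      nlinarith [h1, hce]
    rw [hFval, hsum, div_pow, div_le_div_iff₀ (by positivity) (by positivity)]
    have h2 := mul_le_mul_of_nonneg_left core (show (0:ℝ) ≤ (n.choose (k-1):ℝ)
      * (n.choose k:ℝ) * esym κ Finset.univ (k-1) ^ 2 by positivity)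
    nlinarith [h2]
  · have core : (n.choose k : ℝ) * (K * esym κ Finset.univ k ^ 2
          - (K+1)*(esym κ Finset.univ (k-1) * esym κ Finset.univ (k+1)))
        ≤ ((n:ℝ) - K + 1) * ((n.choose (k-1):ℝ) * esym κ Finset.univ k ^ 2) := by
      have hce : K*(n.choose k:ℝ)*esym κ Finset.univ k^2
          = ((n:ℝ)-K+1)*(n.choose (k-1):ℝ)*esym κ Finset.univ k^2 := by
        linear_combination esym κ Finset.univ k ^ 2 * hckid
      nlinarith [hce, mul_nonneg (mul_nonneg hck.le (show (0:ℝ) ≤ K+1 by positivity))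
        (mul_nonneg hek1.le heknn)]
    rw [hFval, hsum, div_pow, ← mul_div_assoc, div_le_div_iff₀ (by positivity) (by positivity)]
    have h2 := mul_le_mul_of_nonneg_left core (show (0:ℝ) ≤ (n.choose (k-1):ℝ)
      * (n.choose k:ℝ) * esym κ Finset.univ (k-1) ^ 2 by positivity)
    nlinarith [h2]
end
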